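/- arXiv:1501.00710 — 2 statements merged into one kernel-verified Lean document; each statement's English description precedes it below -/
import Mathlib

section
/- Let λ and ν be partitions with λ ⊆ νᵗ. Then Σ_μ r_{μλ} · f^{μᵗ}_ν = P^{λ}_{νᵗ}, where the sum is over all partitions μ with λ ⊆ μ and μᵗ ⊆ ν; that is, the number of pairs consisting of a strictly elegant filling of μ/λ and an elegant filling of ν/μᵗ, summed over all such intermediate partitions μ, equals the number of restricted plane partitions of νᵗ/λ (equivalently, by transposing, of ν/λᵗ). -/
open scoped BigOperators

noncomputable section

/-- Formal power series in variables `x_v`, `v : ℕ` (only `v ≥ 1` is used;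
these represent `x_1, x_2, …`). -/
abbrev PS := MvPowerSeries ℕ ℤ

/-- Indicator: `x` if `P` holds, `0` otherwise. -/
def indic {M : Type*} [Zero M] (P : Prop) (x : M) : M :=
  @ite M P (Classical.propDecidable P) x 0

/-- Total degree of a monomial. -/
def degOf (d : ℕ →₀ ℕ) : ℕ := d.sum fun _ k => k

/-- Substitution of `-x_v` for `x_v` in a power series. -/
def negx (f : PS) : PS := fun d => (-1 : ℤ) ^ degOf d * f d

/-- Homogeneous component of degree `m`. -/
def homogComp (m : ℕ) (f : PS) : PS := fun d => if degOf d = m then f d else 0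

/-! ### Compositions -/

/-- A composition is a finite list of positive integers. -/
def IsComposition (l : List ℕ) : Prop := ∀ x ∈ l, 0 < x

/-- Descent composition `C(w)` of a word with no two equal adjacent letters:
lengths of the maximal ascending runs. -/
def descComp : List ℕ → List ℕ
  | [] => []
  | a :: t =>
    match descComp t, t with
    | _, [] => [1]
    | c :: cs, b :: _ => if b < a then 1 :: c :: cs else (c + 1) :: cs
    | [], _ :: _ => []

/-- Proper partial sums `S_α = {α₁, α₁+α₂, …} ⊆ [n-1]` of a composition. -/
def partialSums (l : List ℕ) : Finset ℕ :=
  ((List.range (l.length - 1)).map fun k => (l.take (k + 1)).sum).toFinset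

def diffList (n : ℕ) : List ℕ → ℕ → List ℕ
  | [], prev => [n - prev]
  | s :: t, prev => (s - prev) :: diffList n t s

/-- Composition `C(S)` of `n` associated to a subset `S = {s₁<…<s_k} ⊆ [n-1]`:
`(s₁, s₂-s₁, …, n-s_k)`. -/
def compOfFinset (n : ℕ) (S : Finset ℕ) : List ℕ :=
  if n = 0 then [] else diffList n (S.sort (· ≤ ·)) 0

/-- `ω(α)`: the unique composition of `n` with `S_{ω(α)} = [n-1] \ S_{rev(α)}`. -/
def omegaC (α : List ℕ) : List ℕ :=
  compOfFinset α.sum ((Finset.Icc 1 (α.sum - 1)) \ partialSums α.reverse)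

/-- A canonical word (permutation of `[n]`) with descent composition `α`. -/
def canonWord : List ℕ → List ℕ
  | [] => []
  | a :: t => (List.range' (t.sum + 1) a) ++ canonWord t

/-! ### Ribbons and mergings -/

/-- The step word of the ribbon of a composition: rows bottom-to-top, a `false` (horizontal
step) between consecutive boxes of a row, a `true` (vertical step) between rows. -/
def ribbonSteps : List ℕ → List Bool
  | [] => []
  | [a] => List.replicate (a - 1) false
  | a :: b :: t => List.replicate (a - 1) false ++ true :: ribbonSteps (b :: t)

/-- Number of subsets of positions of `l` at which the subsequence of `l` equals `p`. -/
def countSubseq : List Bool → List Bool → ℕ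
  | _, [] => 1
  | [], _ :: _ => 0
  | a :: t, b :: p => (if a = b then countSubseq t p else 0) + countSubseq t (b :: p)

/-- `M_{α,β}`: the number of mergings of ribbon `α` resulting in ribbon `β`, i.e. the number
of ways to partition the boxes of `α` into consecutive blocks so that the steps joining
consecutive blocks form the step word of `β`. -/
def mergeCount (a b : List ℕ) : ℕ :=
  if a = [] then (if b = [] then 1 else 0)
  else if b = [] then 0
  else countSubseq (ribbonSteps a) (ribbonSteps b)

/-! ### Labeled posets and their generating functions -/

section Posets

variable {P : Type*} [PartialOrder P]

/-- `a ≤ b` for finite sets: `max a ≤ min b`. -/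
def fsLE (a b : Finset ℕ) : Prop := ∀ x ∈ a, ∀ y ∈ b, x ≤ y
/-- `a < b` for finite sets: `max a < min b`. -/
def fsLT (a b : Finset ℕ) : Prop := ∀ x ∈ a, ∀ y ∈ b, x < y
/-- `a ≤ b` for multisets: `max a ≤ min b`. -/
def msLE (a b : Multiset ℕ) : Prop := ∀ x ∈ a, ∀ y ∈ b, x ≤ y
/-- `a < b` for multisets: `max a < min b`. -/
def msLT (a b : Multiset ℕ) : Prop := ∀ x ∈ a, ∀ y ∈ b, x < y

/-- `(P,θ)`-set-valued partition: nonempty finite sets of positive integers on the elements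
of `P`, weakly increasing along coverings labeled increasingly, strictly otherwise. -/
def IsSVP (θ : P → ℕ) (σ : P → Finset ℕ) : Prop :=
  (∀ p, (σ p).Nonempty) ∧ (∀ p, ∀ x ∈ σ p, 0 < x) ∧
  ∀ s t : P, s ⋖ t → (θ s < θ t → fsLE (σ s) (σ t)) ∧ (θ t < θ s → fsLT (σ s) (σ t))

/-- `(P,θ)`-multiset-valued partition. -/
def IsMSVP (θ : P → ℕ) (σ : P → Multiset ℕ) : Prop :=
  (∀ p, σ p ≠ 0) ∧ (∀ p, ∀ x ∈ σ p, 0 < x) ∧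
  ∀ s t : P, s ⋖ t → (θ s < θ t → msLE (σ s) (σ t)) ∧ (θ t < θ s → msLT (σ s) (σ t))

/-- Ordinary `(P,θ)`-partition. -/
def IsOrdP (θ : P → ℕ) (σ : P → ℕ) : Prop :=
  (∀ p, 0 < σ p) ∧
  ∀ s t : P, s ⋖ t → (θ s < θ t → σ s ≤ σ t) ∧ (θ t < θ s → σ s < σ t)

/-- `K̃_{P,θ}`: generating function of `(P,θ)`-set-valued partitions. -/
def KtildeP (θ : P → ℕ) : PS := fun d =>
  (Set.ncard {σ : P → Finset ℕ |
    IsSVP θ σ ∧ ∀ v, Set.ncard {p : P | v ∈ σ p} = d v} : ℤ)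

/-- `K̂_{P,θ}`: generating function of `(P,θ)`-multiset-valued partitions. -/
def KhatP [Fintype P] (θ : P → ℕ) : PS := fun d =>
  (Set.ncard {σ : P → Multiset ℕ |
    IsMSVP θ σ ∧ ∀ v, (∑ p : P, (σ p).count v) = d v} : ℤ)

/-- Generating function of ordinary `(P,θ)`-partitions. -/
def KordP (θ : P → ℕ) : PS := fun d =>
  (Set.ncard {σ : P → ℕ |
    IsOrdP θ σ ∧ ∀ v, Set.ncard {p : P | σ p = v} = d v} : ℤ)

/-- Linear multi-extension of `P` by `[N]`. -/
def IsLME (N : ℕ) (e : P → Finset (Fin N)) : Prop :=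
  (∀ x y : P, x < y → ∀ a ∈ e x, ∀ b ∈ e y, (a : ℕ) < (b : ℕ)) ∧
  (∀ i : Fin N, ∃! x : P, i ∈ e x) ∧
  (∀ x : P, ∀ a ∈ e x, ∀ b ∈ e x, (a : ℕ) + 1 ≠ (b : ℕ))

/-- `w ∈ J̃_N(P,θ)`: `w` is the word `θ(e⁻¹(1))⋯θ(e⁻¹(N))` of some linear
multi-extension `e` of `P` by `[N]`. -/
def InJtilde (θ : P → ℕ) (N : ℕ) (w : List ℕ) : Prop :=
  w.length = N ∧ ∃ e : P → Finset (Fin N), IsLME N e ∧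
    ∀ (i : Fin N) (x : P), i ∈ e x → w.getD (i : ℕ) 0 = θ x

end Posets

/-- The chain `c₁ < ⋯ < c_k` labeled by the word `w`. -/
def chainTheta (w : List ℕ) : Fin w.length → ℕ := fun j => w.get j

/-- Multi-fundamental quasisymmetric function `L̃_α`. -/
def Ltilde (α : List ℕ) : PS := KtildeP (chainTheta (canonWord α))

/-- `L̂_α`, defined from multiset-valued chain partitions. -/
def Lhat (α : List ℕ) : PS := KhatP (chainTheta (canonWord α))

/-- Fundamental quasisymmetric function `L_α`. -/
def Lfun (α : List ℕ) : PS := KordP (chainTheta (canonWord α))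

/-- The word on the alphabet `[n] = {1,…,n}` encoded by `f : Fin N → Fin n`. -/
def wordOf {N n : ℕ} (f : Fin N → Fin n) : List ℕ := List.ofFn fun j => ((f j : ℕ) + 1)

/-! ### Multiwords, multishuffles, permutation words -/

/-- `w` is a multiword of `a`. -/
def IsMultiword (w a : List ℕ) : Prop :=
  ∃ t : Fin w.length → Fin a.length, Monotone t ∧ Function.Surjective t ∧
    ∀ j : Fin w.length, w.get j = a.get (t j)

/-- `w` is a multishuffle of `a` and `b` (for `a`, `b` with distinct letters from
disjoint alphabets). -/
def IsMultishuffle (w a b : List ℕ) : Prop :=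
  List.Chain' (· ≠ ·) w ∧ (∀ x ∈ w, x ∈ a ∨ x ∈ b) ∧
  IsMultiword (w.filter fun x => decide (x ∈ a)) a ∧
  IsMultiword (w.filter fun x => decide (x ∈ b)) b

/-- `v[n]`: add `n` to every letter. -/
def shiftWord (n : ℕ) (v : List ℕ) : List ℕ := v.map (· + n)

/-- The increasing word `1 2 ⋯ n`. -/
def idWord (n : ℕ) : List ℕ := List.range' 1 n

/-- `w` is (the word of) a permutation of `[w.length]`. -/
def IsPermWord (w : List ℕ) : Prop := w.Nodup ∧ ∀ x ∈ w, 1 ≤ x ∧ x ≤ w.length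

/-- All permutation words of `[i]`. -/
def permWords (i : ℕ) : Finset (List ℕ) := (List.permutations (idWord i)).toFinset

/-- All permutation words of `[i]` for `i ≤ N`. -/
def allPerms (N : ℕ) : Finset (List ℕ) := (Finset.range (N + 1)).biUnion permWords

/-! ### MNSym -/

/-- The free ℤ-module with basis indexed by compositions (as lists). -/
abbrev MNSym := List ℕ →₀ ℤ

/-- Basis element `R̃_α`. -/
def Rt (a : List ℕ) : MNSym := Finsupp.single a 1

/-- `R̃_α • R̃_β = R̃_{α◁β} + R̃_{α·β} + R̃_{α▷β}` on basis elements, with `R̃_∅ = 1` the unit. -/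
def basisMul (a b : List ℕ) : MNSym :=
  if a = [] then Rt b
  else if b = [] then Rt a
  else Rt (a ++ b) + Rt (a.dropLast ++ (a.getLastD 0 + b.headD 0 - 1) :: b.tail)
    + Rt (a.dropLast ++ (a.getLastD 0 + b.headD 0) :: b.tail)

/-- The bilinear product `•` of `MNSym`. -/
def mnMul (x y : MNSym) : MNSym :=
  x.sum fun a ca => y.sum fun b cb => (ca * cb) • basisMul a b

/-! ### Shapes and tableaux -/

/-- Box `b = (i,j)` (row `i`, column `j`, both 0-indexed) belongs to the Young diagram
of `l`. -/
def InShape (l : List ℕ) (b : ℕ × ℕ) : Prop := b.1 < l.length ∧ b.2 < l.getD b.1 0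

/-- A partition: a weakly decreasing list of positive integers. -/
def IsPartition (l : List ℕ) : Prop := (∀ x ∈ l, 0 < x) ∧ l.Pairwise (· ≥ ·)

/-- Shape containment `μ ⊆ l`. -/
def subShape (μ l : List ℕ) : Prop := ∀ i, μ.getD i 0 ≤ l.getD i 0

/-- Conjugate (transpose) partition. -/
def conj (l : List ℕ) : List ℕ :=
  (List.range (l.headD 0)).map fun j => l.countP fun a => decide (j < a)

/-- The boxes of the Young diagram of `l`, as a finset. -/
def shapeFinset (l : List ℕ) : Finset (ℕ × ℕ) :=
  ((Finset.range l.length).sigma fun i => Finset.range (l.getD i 0)).image fun p => (p.1, p.2)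

theorem mem_shapeFinset (l : List ℕ) (b : ℕ × ℕ) : b ∈ shapeFinset l ↔ InShape l b := by
  simp only [shapeFinset, Finset.mem_image, Finset.mem_sigma, Finset.mem_range, InShape]
  constructor
  · rintro ⟨⟨i, j⟩, ⟨hi, hj⟩, rfl⟩; exact ⟨hi, hj⟩
  · rintro ⟨h1, h2⟩; exact ⟨⟨b.1, b.2⟩, ⟨h1, h2⟩, rfl⟩

/-- Box `b` lies in the skew shape `l/μ`. -/
def Skew (μ l : List ℕ) (b : ℕ × ℕ) : Prop := InShape l b ∧ ¬ InShape μ b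

/-- Set-valued tableau of shape `l`: nonempty finite sets of positive integers, rows
weakly increasing, columns strictly increasing. -/
def IsSVT (l : List ℕ) (T : ℕ × ℕ → Finset ℕ) : Prop :=
  (∀ b, ¬ InShape l b → T b = ∅) ∧
  (∀ b, InShape l b → (T b).Nonempty ∧ ∀ x ∈ T b, 0 < x) ∧
  (∀ i j, InShape l (i, j + 1) → fsLE (T (i, j)) (T (i, j + 1))) ∧
  (∀ i j, InShape l (i + 1, j) → fsLT (T (i, j)) (T (i + 1, j)))

/-- The stable Grothendieck polynomial `G_λ = Σ_T (-1)^{|T|-|λ|} x^T`. -/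
def Gpoly (l : List ℕ) : PS := fun d =>
  ((-1 : ℤ)) ^ (degOf d + l.sum) *
    (Set.ncard {T : ℕ × ℕ → Finset ℕ |
      IsSVT l T ∧ ∀ v, Set.ncard {b : ℕ × ℕ | v ∈ T b} = d v} : ℤ)

/-- `K̃_λ`, defined directly as the generating function of set-valued tableaux. -/
def KtilTab (l : List ℕ) : PS := fun d =>
  (Set.ncard {T : ℕ × ℕ → Finset ℕ |
    IsSVT l T ∧ ∀ v, Set.ncard {b : ℕ × ℕ | v ∈ T b} = d v} : ℤ)

/-- Weak set-valued tableau of shape `l`: nonempty finite multisets of positive integers,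
rows strictly increasing, columns weakly increasing. -/
def IsWSVT (l : List ℕ) (T : ℕ × ℕ → Multiset ℕ) : Prop :=
  (∀ b, ¬ InShape l b → T b = 0) ∧
  (∀ b, InShape l b → T b ≠ 0 ∧ ∀ x ∈ T b, 0 < x) ∧
  (∀ i j, InShape l (i, j + 1) → msLT (T (i, j)) (T (i, j + 1))) ∧
  (∀ i j, InShape l (i + 1, j) → msLE (T (i, j)) (T (i + 1, j)))

/-- `J_λ`: the weight generating function of weak set-valued tableaux of shape `λ`. -/
def Jpoly (l : List ℕ) : PS := fun d =>
  (Set.ncard {T : ℕ × ℕ → Multiset ℕ |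
    IsWSVT l T ∧ ∀ v, (∑ b ∈ shapeFinset l, (T b).count v) = d v} : ℤ)

/-- Semistandard Young tableau of shape `l`. -/
def IsSSYT (l : List ℕ) (T : ℕ × ℕ → ℕ) : Prop :=
  (∀ b, ¬ InShape l b → T b = 0) ∧
  (∀ b, InShape l b → 0 < T b) ∧
  (∀ i j, InShape l (i, j + 1) → T (i, j) ≤ T (i, j + 1)) ∧
  (∀ i j, InShape l (i + 1, j) → T (i, j) < T (i + 1, j))

/-- The Schur function `s_λ`. -/
def schur (l : List ℕ) : PS := fun d =>
  (Set.ncard {T : ℕ × ℕ → ℕ |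
    IsSSYT l T ∧ ∀ v, Set.ncard {b : ℕ × ℕ | InShape l b ∧ T b = v} = d v} : ℤ)

/-- Reverse plane partition of shape `l`. -/
def IsRevPP (l : List ℕ) (T : ℕ × ℕ → ℕ) : Prop :=
  (∀ b, ¬ InShape l b → T b = 0) ∧
  (∀ b, InShape l b → 0 < T b) ∧
  (∀ i j, InShape l (i, j + 1) → T (i, j) ≤ T (i, j + 1)) ∧
  (∀ i j, InShape l (i + 1, j) → T (i, j) ≤ T (i + 1, j))

/-- The dual stable Grothendieck polynomial `g_λ`; the exponent of `x_v` is the number of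
columns containing `v`. -/
def gpoly (l : List ℕ) : PS := fun d =>
  (Set.ncard {T : ℕ × ℕ → ℕ |
    IsRevPP l T ∧ ∀ v, Set.ncard {j : ℕ | ∃ i, InShape l (i, j) ∧ T (i, j) = v} = d v} : ℤ)

/-- Valued-set tableau of shape `l`: a filling `F` whose transpose is semistandard
(rows strictly increasing, columns weakly increasing), together with a decomposition into
groups encoded by the marking `g` of the top box of each group (groups are contiguous runs
within a column; unmarked boxes carry the same value as the box above). -/
def IsVST (l : List ℕ) (F : ℕ × ℕ → ℕ) (g : ℕ × ℕ → Bool) : Prop :=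
  (∀ b, ¬ InShape l b → F b = 0 ∧ g b = false) ∧
  (∀ b, InShape l b → 0 < F b) ∧
  (∀ i j, InShape l (i, j + 1) → F (i, j) < F (i, j + 1)) ∧
  (∀ i j, InShape l (i + 1, j) → F (i, j) ≤ F (i + 1, j)) ∧
  (∀ j, InShape l (0, j) → g (0, j) = true) ∧
  (∀ i j, InShape l (i + 1, j) → g (i + 1, j) = false → F (i + 1, j) = F (i, j))

/-- `j_λ`: the weight generating function of valued-set tableaux; the exponent of `x_v` is
the number of groups with entry `v`. -/
def jpoly (l : List ℕ) : PS := fun d =>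
  (Set.ncard {Fg : (ℕ × ℕ → ℕ) × (ℕ × ℕ → Bool) |
    IsVST l Fg.1 Fg.2 ∧
    ∀ v, Set.ncard {b : ℕ × ℕ | InShape l b ∧ Fg.2 b = true ∧ Fg.1 b = v} = d v} : ℤ)

/-- `b` is an outer corner of `μ`: `μ ∪ {b}` is again a Young diagram. -/
def OuterCorner (μ : List ℕ) (b : ℕ × ℕ) : Prop :=
  b.1 ≤ μ.length ∧ b.2 = μ.getD b.1 0 ∧ (b.1 = 0 ∨ b.2 < μ.getD (b.1 - 1) 0)

/-- `h(b)`: the number of boxes of `μ` above `b` in its column plus the number to its left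
in its row. -/
def hBox (μ : List ℕ) (b : ℕ × ℕ) : ℕ :=
  ((Finset.range b.1).filter fun i => b.2 < μ.getD i 0 ∧ i < μ.length).card +
  ((Finset.range b.2).filter fun j => j < μ.getD b.1 0 ∧ b.1 < μ.length).card

/-- Restricted plane partition of `l/μ`. -/
def IsRPP (μ l : List ℕ) (F : ℕ × ℕ → ℕ) : Prop :=
  (∀ b, ¬ Skew μ l b → F b = 0) ∧
  (∀ b, Skew μ l b → 0 < F b) ∧
  (∀ i j, Skew μ l (i, j) → Skew μ l (i, j + 1) → F (i, j + 1) ≤ F (i, j)) ∧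
  (∀ i j, Skew μ l (i, j) → Skew μ l (i + 1, j) → F (i + 1, j) ≤ F (i, j)) ∧
  (∀ b, Skew μ l b → OuterCorner μ b → F b ≤ hBox μ b)

/-- `P^μ_λ`: the number of restricted plane partitions of `λ/μ` (`0` if `μ ⊄ λ`,
and `1` if `μ = λ`). -/
def Pnum (μ l : List ℕ) : ℕ :=
  indic (subShape μ l) (Set.ncard {F : ℕ × ℕ → ℕ | IsRPP μ l F})

/-- Elegant filling of `l/μ`: semistandard, entries in (0-indexed) row `i` lie in `[1,i]`. -/
def IsElegant (μ l : List ℕ) (F : ℕ × ℕ → ℕ) : Prop :=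
  (∀ b, ¬ Skew μ l b → F b = 0) ∧
  (∀ b, Skew μ l b → 1 ≤ F b ∧ F b ≤ b.1) ∧
  (∀ i j, Skew μ l (i, j) → Skew μ l (i, j + 1) → F (i, j) ≤ F (i, j + 1)) ∧
  (∀ i j, Skew μ l (i, j) → Skew μ l (i + 1, j) → F (i, j) < F (i + 1, j))

/-- Strictly elegant filling of `l/μ`: elegant with both rows and columns strictly
increasing. -/
def IsStrictElegant (μ l : List ℕ) (F : ℕ × ℕ → ℕ) : Prop :=
  (∀ b, ¬ Skew μ l b → F b = 0) ∧
  (∀ b, Skew μ l b → 1 ≤ F b ∧ F b ≤ b.1) ∧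
  (∀ i j, Skew μ l (i, j) → Skew μ l (i, j + 1) → F (i, j) < F (i, j + 1)) ∧
  (∀ i j, Skew μ l (i, j) → Skew μ l (i + 1, j) → F (i, j) < F (i + 1, j))

/-- `f^μ_λ`: the number of elegant fillings of `λ/μ`. -/
def fENum (μ l : List ℕ) : ℕ := Set.ncard {F : ℕ × ℕ → ℕ | IsElegant μ l F}

/-- `r_{λμ}`: the number of strictly elegant fillings of `λ/μ`. -/
def rENum (μ l : List ℕ) : ℕ := Set.ncard {F : ℕ × ℕ → ℕ | IsStrictElegant μ l F}

/-! ### The box poset of a partition -/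

/-- The poset of boxes of the Young diagram of `l` (componentwise order: each box is
covered by the box to its right and the box below it). -/
def BoxP (l : List ℕ) : Type := {b : ℕ × ℕ // InShape l b}

instance (l : List ℕ) : PartialOrder (BoxP l) :=
  inferInstanceAs (PartialOrder {b : ℕ × ℕ // InShape l b})

instance (l : List ℕ) : Fintype (BoxP l) :=
  Fintype.subtype (shapeFinset l) (mem_shapeFinset l)

/-- The row-reading labeling `θ_s` of the boxes: bottom row first, left to right. -/
def rowLabel (l : List ℕ) : BoxP l → ℕ := fun b => (l.drop (b.1.1 + 1)).sum + b.1.2 + 1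

/-! ### i-extensions -/

/-- `|T(D,E)|`: the number of `i`-extensions of `D ⊆ [n-1]` to `E ⊆ [n+i-1]`, i.e. injective
order-preserving maps `t : [n-1] → [n+i-1]` (encoded on `Fin (n-1)` via `j ↦ j+1`) with
`t(D) ⊆ E` and `E \ t(D) = [n+i-1] \ t([n-1])`. -/
def iExtCount (n i : ℕ) (D E : Finset ℕ) : ℕ :=
  Set.ncard {t : Fin (n - 1) → ℕ |
    StrictMono t ∧ (∀ j, t j ∈ Finset.Icc 1 (n + i - 1)) ∧
    (∀ j : Fin (n - 1), (j : ℕ) + 1 ∈ D → t j ∈ E) ∧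
    E \ Finset.image t (Finset.univ.filter fun j : Fin (n - 1) => (j : ℕ) + 1 ∈ D)
      = Finset.Icc 1 (n + i - 1) \ Finset.image t Finset.univ}


/-! ### Auxiliary lemmas for stmt10 -/

section Stmt10Aux

lemma IsPartition.tail {a : ℕ} {t : List ℕ} (h : IsPartition (a :: t)) : IsPartition t :=
  ⟨fun x hx => h.1 x (List.mem_cons_of_mem a hx), (List.pairwise_cons.mp h.2).2⟩

lemma part_getD_le {p : List ℕ} (hp : IsPartition p) {i i' : ℕ} (h : i ≤ i') :
    p.getD i' 0 ≤ p.getD i 0 := by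
  by_cases hi' : i' < p.length
  · have hi : i < p.length := lt_of_le_of_lt h hi'
    rw [List.getD_eq_getElem _ _ hi', List.getD_eq_getElem _ _ hi]
    rcases Nat.eq_or_lt_of_le h with rfl | hlt
    · exact le_refl _
    · exact List.pairwise_iff_getElem.mp hp.2 i i' hi hi' hlt
  · rw [List.getD_eq_default _ _ (le_of_not_gt hi')]
    exact Nat.zero_le _

lemma part_getD_pos {p : List ℕ} (hp : IsPartition p) {i : ℕ} :
    0 < p.getD i 0 ↔ i < p.length := by
  constructor
  · intro h
    by_contra hc
    rw [List.getD_eq_default _ _ (le_of_not_gt hc)] at h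
    exact lt_irrefl 0 h
  · intro h
    rw [List.getD_eq_getElem _ _ h]
    exact hp.1 _ (List.getElem_mem h)

lemma part_ext {p q : List ℕ} (hp : IsPartition p) (hq : IsPartition q)
    (h : ∀ i, p.getD i 0 = q.getD i 0) : p = q := by
  have hlen : p.length = q.length := by
    by_contra hc
    rcases Nat.lt_or_ge p.length q.length with hlt | hge
    · have h1 : 0 < q.getD p.length 0 := (part_getD_pos hq).mpr hlt
      rw [← h, List.getD_eq_default _ _ (le_refl _)] at h1
      exact lt_irrefl 0 h1
    · rcases Nat.eq_or_lt_of_le hge with heq | hlt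
      · exact hc heq.symm
      · have h1 : 0 < p.getD q.length 0 := (part_getD_pos hp).mpr hlt
        rw [h, List.getD_eq_default _ _ (le_refl _)] at h1
        exact lt_irrefl 0 h1
  apply List.ext_getElem hlen
  intro i h1 h2
  have := h i
  rwa [List.getD_eq_getElem _ _ h1, List.getD_eq_getElem _ _ h2] at this

lemma part_lt_countP {p : List ℕ} (hp : IsPartition p) (r j : ℕ) :
    r < p.countP (fun a => decide (j < a)) ↔ (r < p.length ∧ j < p.getD r 0) := by
  induction p generalizing r with
  | nil => simp
  | cons a t ih =>
    by_cases hja : j < a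
    · have hcnt : (a :: t).countP (fun a => decide (j < a))
          = t.countP (fun a => decide (j < a)) + 1 := by
        rw [List.countP_cons, if_pos (by simpa using hja)]
      rw [hcnt]
      cases r with
      | zero =>
        have h00 : (a :: t).getD 0 0 = a := rfl
        simp only [List.length_cons, h00]
        omega
      | succ s =>
        have := ih hp.tail s
        rw [List.getD_cons_succ]
        simp only [List.length_cons]
        omega
    · have h0 : (a :: t).countP (fun a => decide (j < a)) = 0 := by
        apply List.countP_eq_zero.mpr
        intro x hx
        have : x ≤ a := by
          rcases List.mem_cons.mp hx with rfl | hxt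
          · exact le_refl _
          · exact List.rel_of_pairwise_cons hp.2 hxt
        simp only [decide_eq_true_eq]
        omega
      rw [h0]
      simp only [Nat.not_lt_zero, false_iff, not_and, not_lt]
      intro hr
      have h1 : (a :: t).getD r 0 ≤ (a :: t).getD 0 0 := part_getD_le hp (Nat.zero_le r)
      have h00 : (a :: t).getD 0 0 = a := rfl
      omega

lemma headD_eq_getD (p : List ℕ) : p.headD 0 = p.getD 0 0 := by cases p <;> rfl

lemma conj_length (p : List ℕ) : (conj p).length = p.headD 0 := by
  simp [conj]

lemma conj_getD {p : List ℕ} (hp : IsPartition p) (j : ℕ) :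
    (conj p).getD j 0 = p.countP (fun a => decide (j < a)) := by
  by_cases hj : j < p.headD 0
  · have hj' : j < (conj p).length := by rwa [conj_length]
    rw [List.getD_eq_getElem _ _ hj']
    simp [conj]
  · rw [List.getD_eq_default _ _ (by rw [conj_length]; omega)]
    symm
    apply List.countP_eq_zero.mpr
    intro x hx
    rcases List.mem_iff_getElem.mp hx with ⟨k, hk, rfl⟩
    have h1 : p.getD k 0 ≤ p.getD 0 0 := part_getD_le hp (Nat.zero_le k)
    rw [List.getD_eq_getElem _ _ hk] at h1
    rw [headD_eq_getD] at hj
    simp only [decide_eq_true_eq]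
    omega

lemma inShape_conj {p : List ℕ} (hp : IsPartition p) (a b : ℕ) :
    InShape (conj p) (a, b) ↔ (b < p.length ∧ a < p.getD b 0) := by
  unfold InShape
  simp only
  rw [conj_getD hp, conj_length]
  rw [← part_lt_countP hp b a]
  constructor
  · rintro ⟨_, h2⟩; exact h2
  · intro h1
    refine ⟨?_, h1⟩
    have h0 : 0 < p.countP (fun x => decide (a < x)) := lt_of_le_of_lt (Nat.zero_le b) h1
    rw [part_lt_countP hp 0 a] at h0
    rw [headD_eq_getD]
    exact h0.2

lemma isPartition_conj {p : List ℕ} (hp : IsPartition p) : IsPartition (conj p) := by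
  constructor
  · intro x hx
    rcases List.mem_iff_getElem.mp hx with ⟨k, hk, rfl⟩
    have hk' : k < p.headD 0 := by rwa [conj_length] at hk
    have hlen : 0 < p.length := by
      rw [← part_getD_pos hp (i := 0), ← headD_eq_getD]; omega
    have hk0 : k < p.getD 0 0 := by rwa [headD_eq_getD] at hk'
    have e : (conj p)[k] = (conj p).getD k 0 := (List.getD_eq_getElem _ _ hk).symm
    rw [e, conj_getD hp]
    exact (part_lt_countP hp 0 k).mpr ⟨hlen, hk0⟩
  · rw [List.pairwise_iff_getElem]
    intro i j hi hj hij
    have e1 : (conj p)[i] = (conj p).getD i 0 := (List.getD_eq_getElem _ _ hi).symm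
    have e2 : (conj p)[j] = (conj p).getD j 0 := (List.getD_eq_getElem _ _ hj).symm
    rw [e1, e2, conj_getD hp, conj_getD hp]
    apply List.countP_mono_left
    intro x _ hx
    simp only [decide_eq_true_eq] at hx ⊢
    omega

lemma subShape_conj_right {μ ν : List ℕ} (hμ : IsPartition μ) (hν : IsPartition ν) :
    subShape (conj μ) ν ↔ subShape μ (conj ν) := by
  constructor
  · intro hs i
    rcases Nat.eq_zero_or_pos (μ.getD i 0) with h0 | h0
    · rw [h0]; exact Nat.zero_le _
    · set v := μ.getD i 0 with hv
      have key : i < μ.countP (fun a => decide (v - 1 < a)) :=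
        (part_lt_countP hμ i (v-1)).mpr ⟨(part_getD_pos hμ).mp h0, by omega⟩
      rw [← conj_getD hμ] at key
      have h3 : i < ν.getD (v-1) 0 := lt_of_lt_of_le key (hs (v-1))
      have h4 : v - 1 < ν.length := (part_getD_pos hν).mp (by omega)
      have h5 : v - 1 < ν.countP (fun a => decide (i < a)) :=
        (part_lt_countP hν _ _).mpr ⟨h4, h3⟩
      rw [conj_getD hν]
      omega
  · intro hs j
    rw [conj_getD hμ]
    set c := μ.countP (fun a => decide (j < a)) with hc
    rcases Nat.eq_zero_or_pos c with h0 | h0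
    · rw [h0]; exact Nat.zero_le _
    have key : c - 1 < μ.length ∧ j < μ.getD (c-1) 0 := by
      rw [← part_lt_countP hμ, ← hc]; omega
    have h2 : μ.getD (c-1) 0 ≤ (conj ν).getD (c-1) 0 := hs (c-1)
    have h3 : j < (conj ν).getD (c-1) 0 := lt_of_lt_of_le key.2 h2
    rw [conj_getD hν, part_lt_countP hν] at h3
    omega

lemma inShape_def {p : List ℕ} {i j : ℕ} :
    InShape p (i, j) ↔ (i < p.length ∧ j < p.getD i 0) := Iff.rfl

lemma inShape_mono {p : List ℕ} (hp : IsPartition p) {i j i' j' : ℕ}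
    (h : InShape p (i, j)) (hi : i' ≤ i) (hj : j' ≤ j) : InShape p (i', j') := by
  rw [inShape_def] at h ⊢
  have h3 : p.getD i 0 ≤ p.getD i' 0 := part_getD_le hp hi
  refine ⟨(part_getD_pos hp).mp (by omega), by omega⟩

lemma subShape_inShape {p q : List ℕ} (hq : IsPartition q) (hs : subShape p q)
    {b : ℕ × ℕ} (h : InShape p b) : InShape q b := by
  obtain ⟨h1, h2⟩ := h
  have h3 : p.getD b.1 0 ≤ q.getD b.1 0 := hs b.1
  exact ⟨(part_getD_pos hq).mp (by omega), by omega⟩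

lemma inShape_iff_getD {p : List ℕ} (hp : IsPartition p) {i j : ℕ} :
    InShape p (i, j) ↔ j < p.getD i 0 := by
  rw [inShape_def]
  constructor
  · exact fun h => h.2
  · exact fun h => ⟨(part_getD_pos hp).mp (by omega), h⟩

lemma skew_row_sub {l κ : List ℕ} (hl : IsPartition l) {i j t : ℕ}
    (hsk : Skew l κ (i, j)) (hjt : j ≤ t) (ht : InShape κ (i, t)) : Skew l κ (i, t) := by
  refine ⟨ht, fun hc => hsk.2 (inShape_mono hl hc (le_refl i) hjt)⟩

lemma rpp_row_le {l κ : List ℕ} (hl : IsPartition l) (hκ : IsPartition κ) {F : ℕ × ℕ → ℕ}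
    (hF : IsRPP l κ F) {i j j' : ℕ} (hjj' : j ≤ j') (hsk : Skew l κ (i, j))
    (hsk' : Skew l κ (i, j')) : F (i, j') ≤ F (i, j) := by
  induction j' with
  | zero => have : j = 0 := by omega
            subst this; exact le_refl _
  | succ t ih =>
    rcases Nat.eq_or_lt_of_le hjj' with heq | hlt
    · subst heq; exact le_refl _
    · have htj : j ≤ t := by omega
      have htk : InShape κ (i, t) := inShape_mono hκ hsk'.1 (le_refl i) (by omega)
      have hskt : Skew l κ (i, t) := skew_row_sub hl hsk htj htk
      exact le_trans (hF.2.2.1 i t hskt hsk') (ih htj hskt)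

lemma hBox_le {l : List ℕ} (b : ℕ × ℕ) : hBox l b ≤ b.1 + b.2 := by
  unfold hBox
  have h1 := Finset.card_filter_le (Finset.range b.1)
    (fun i => b.2 < l.getD i 0 ∧ i < l.length)
  have h2 := Finset.card_filter_le (Finset.range b.2)
    (fun j => j < l.getD b.1 0 ∧ b.1 < l.length)
  rw [Finset.card_range] at h1 h2
  omega

lemma rpp_le_add {l κ : List ℕ} (hl : IsPartition l) (hκ : IsPartition κ) {F : ℕ × ℕ → ℕ}
    (hF : IsRPP l κ F) : ∀ i j, Skew l κ (i, j) → F (i, j) ≤ i + j := by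
  suffices H : ∀ n i j, i + j ≤ n → Skew l κ (i, j) → F (i, j) ≤ i + j by
    exact fun i j hsk => H (i + j) i j (le_refl _) hsk
  intro n
  induction n with
  | zero =>
    intro i j hij hsk
    have hi0 : i = 0 := by omega
    have hj0 : j = 0 := by omega
    subst hi0; subst hj0
    have hcor : OuterCorner l (0, 0) := by
      refine ⟨Nat.zero_le _, ?_, Or.inl rfl⟩
      show (0 : ℕ) = l.getD 0 0
      by_contra hc
      have hin : InShape l (0, 0) := (inShape_iff_getD hl).mpr (by omega)
      exact hsk.2 hin
    have := hF.2.2.2.2 (0, 0) hsk hcor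
    have hb := hBox_le (l := l) (0, 0)
    omega
  | succ n ih =>
    intro i j hij hsk
    by_cases hc : OuterCorner l (i, j)
    · exact le_trans (hF.2.2.2.2 (i, j) hsk hc) (hBox_le _)
    · have hjl : l.getD i 0 ≤ j := by
        by_contra hcc
        exact hsk.2 ((inShape_iff_getD hl).mpr (by omega))
      by_cases hj2 : l.getD i 0 < j
      · -- use left neighbor
        have hj1 : 1 ≤ j := by omega
        have hsk1 : Skew l κ (i, j - 1) := by
          refine ⟨inShape_mono hκ hsk.1 (le_refl i) (by omega), fun hcc => ?_⟩
          rw [inShape_iff_getD hl] at hcc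
          omega
        have e : j - 1 + 1 = j := by omega
        have hstep : F (i, j - 1 + 1) ≤ F (i, j - 1) :=
          hF.2.2.1 i (j - 1) hsk1 (by rw [e]; exact hsk)
        rw [e] at hstep
        have hih : F (i, j - 1) ≤ i + (j - 1) := ih i (j - 1) (by omega) hsk1
        omega
      · have hji : j = l.getD i 0 := by omega
        unfold OuterCorner at hc
        push_neg at hc
        simp only at hc
        have hi0 : i ≠ 0 := by
          intro hcc
          subst hcc
          exact (hc (Nat.zero_le _) hji).1 rfl
        have hup : l.getD (i - 1) 0 ≤ j := by
          by_cases hil : i ≤ l.length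
          · exact (hc hil hji).2
          · rw [List.getD_eq_default _ _ (by omega)]
            exact Nat.zero_le _
        have hsk1 : Skew l κ (i - 1, j) := by
          refine ⟨inShape_mono hκ hsk.1 (by omega) (le_refl j), fun hcc => ?_⟩
          rw [inShape_iff_getD hl] at hcc
          omega
        have e : i - 1 + 1 = i := by omega
        have hstep : F (i - 1 + 1, j) ≤ F (i - 1, j) :=
          hF.2.2.2.1 (i - 1) j hsk1 (by rw [e]; exact hsk)
        rw [e] at hstep
        have hih : F (i - 1, j) ≤ (i - 1) + j := ih (i - 1) j (by omega) hsk1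
        omega

/-- The row lengths of the intermediate shape `μ` extracted from a restricted plane
partition `F`. -/
def muRow (l κ : List ℕ) (F : ℕ × ℕ → ℕ) (i : ℕ) : ℕ :=
  max (l.getD i 0) ((Finset.range (κ.getD i 0)).sup fun j => if j < F (i, j) then j + 1 else 0)

lemma lt_muRow_iff {l κ : List ℕ} (hl : IsPartition l) (hκ : IsPartition κ) {F : ℕ × ℕ → ℕ}
    (hF : IsRPP l κ F) {i j : ℕ} :
    j < muRow l κ F i ↔ (j < l.getD i 0 ∨ (j < κ.getD i 0 ∧ j < F (i, j))) := by
  unfold muRow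
  rw [lt_max_iff]
  constructor
  · rintro (h | h)
    · exact Or.inl h
    · rw [Finset.lt_sup_iff] at h
      obtain ⟨j', hj'mem, hj'⟩ := h
      rw [Finset.mem_range] at hj'mem
      by_cases hif : j' < F (i, j')
      · rw [if_pos hif] at hj'
        have hjj' : j ≤ j' := by omega
        by_cases hjli : j < l.getD i 0
        · exact Or.inl hjli
        · right
          have hFne : F (i, j') ≠ 0 := by omega
          have hskj' : Skew l κ (i, j') := by
            by_contra hcc
            exact hFne (hF.1 _ hcc)
          have hskj : Skew l κ (i, j) :=
            ⟨inShape_mono hκ hskj'.1 (le_refl i) hjj',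
             fun hcc => hjli ((inShape_iff_getD hl).mp hcc)⟩
          have := rpp_row_le hl hκ hF hjj' hskj hskj'
          exact ⟨by omega, by omega⟩
      · rw [if_neg hif] at hj'
        omega
  · rintro (h | ⟨h1, h2⟩)
    · exact Or.inl h
    · right
      rw [Finset.lt_sup_iff]
      exact ⟨j, Finset.mem_range.mpr h1, by rw [if_pos h2]; omega⟩

lemma length_le_of_subShape {l κ : List ℕ} (hl : IsPartition l) (hκ : IsPartition κ)
    (hlκ : subShape l κ) : l.length ≤ κ.length := by
  rcases Nat.eq_zero_or_pos l.length with h0 | h0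
  · omega
  · have h1 : 0 < l.getD (l.length - 1) 0 := (part_getD_pos hl).mpr (by omega)
    have h2 : l.getD (l.length - 1) 0 ≤ κ.getD (l.length - 1) 0 := hlκ _
    have h3 : l.length - 1 < κ.length := (part_getD_pos hκ).mp (by omega)
    omega

lemma muRow_succ_le {l κ : List ℕ} (hl : IsPartition l) (hκ : IsPartition κ)
    (hlκ : subShape l κ) {F : ℕ × ℕ → ℕ} (hF : IsRPP l κ F) (i : ℕ) :
    muRow l κ F (i + 1) ≤ muRow l κ F i := by
  apply le_of_forall_lt
  intro x hx
  rw [lt_muRow_iff hl hκ hF] at hx ⊢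
  rcases hx with h | ⟨h1, h2⟩
  · left
    have := part_getD_le hl (show i ≤ i + 1 by omega)
    omega
  · have hFne : F (i + 1, x) ≠ 0 := by omega
    have hsk : Skew l κ (i + 1, x) := by
      by_contra hcc
      exact hFne (hF.1 _ hcc)
    by_cases hup : InShape l (i, x)
    · exact Or.inl ((inShape_iff_getD hl).mp hup)
    · right
      have hskup : Skew l κ (i, x) := ⟨inShape_mono hκ hsk.1 (Nat.le_succ i) (le_refl x), hup⟩
      have := hF.2.2.2.1 i x hskup hsk
      exact ⟨(inShape_iff_getD hκ).mp hskup.1, by omega⟩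

lemma muRow_antitone {l κ : List ℕ} (hl : IsPartition l) (hκ : IsPartition κ)
    (hlκ : subShape l κ) {F : ℕ × ℕ → ℕ} (hF : IsRPP l κ F) :
    Antitone (muRow l κ F) :=
  antitone_nat_of_succ_le (muRow_succ_le hl hκ hlκ hF)

lemma muRow_zero_of_big {l κ : List ℕ} (hl : IsPartition l) (hκ : IsPartition κ)
    (hlκ : subShape l κ) {F : ℕ × ℕ → ℕ} {i : ℕ} (hi : κ.length ≤ i) :
    muRow l κ F i = 0 := by
  unfold muRow
  have h1 : l.getD i 0 = 0 :=
    List.getD_eq_default _ _ (le_trans (length_le_of_subShape hl hκ hlκ) hi)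
  have h2 : κ.getD i 0 = 0 := List.getD_eq_default _ _ hi
  rw [h1, h2]
  simp

/-- Cut-off for the length of `μ`. -/
def muN (l κ : List ℕ) (F : ℕ × ℕ → ℕ) : ℕ :=
  (Finset.range (κ.length + 1)).sup fun i => if 0 < muRow l κ F i then i + 1 else 0

/-- The intermediate partition `μ` extracted from a restricted plane partition. -/
def muList (l κ : List ℕ) (F : ℕ × ℕ → ℕ) : List ℕ :=
  (List.range (muN l κ F)).map (muRow l κ F)

lemma muList_getD {l κ : List ℕ} (hl : IsPartition l) (hκ : IsPartition κ)
    (hlκ : subShape l κ) {F : ℕ × ℕ → ℕ} (hF : IsRPP l κ F) (i : ℕ) :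
    (muList l κ F).getD i 0 = muRow l κ F i := by
  have hlen : (muList l κ F).length = muN l κ F := by
    simp [muList]
  by_cases hi : i < muN l κ F
  · rw [List.getD_eq_getElem _ _ (by omega)]
    simp [muList]
  · rw [List.getD_eq_default _ _ (by omega)]
    by_contra hcc
    have hpos : 0 < muRow l κ F i := by omega
    have hile : i ≤ κ.length := by
      by_contra hc2
      rw [muRow_zero_of_big hl hκ hlκ (by omega)] at hpos
      omega
    have hle : (if 0 < muRow l κ F i then i + 1 else 0) ≤ muN l κ F := by
      unfold muN
      exact Finset.le_sup (f := fun i => if 0 < muRow l κ F i then i + 1 else 0)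
        (Finset.mem_range.mpr (by omega))
    rw [if_pos hpos] at hle
    omega

lemma isPartition_muList {l κ : List ℕ} (hl : IsPartition l) (hκ : IsPartition κ)
    (hlκ : subShape l κ) {F : ℕ × ℕ → ℕ} (hF : IsRPP l κ F) :
    IsPartition (muList l κ F) := by
  constructor
  · intro x hx
    rw [muList, List.mem_map] at hx
    obtain ⟨k, hk, rfl⟩ := hx
    rw [List.mem_range] at hk
    have : k < (Finset.range (κ.length + 1)).sup
        fun i => if 0 < muRow l κ F i then i + 1 else 0 := hk
    rw [Finset.lt_sup_iff] at this
    obtain ⟨i0, _, hi0⟩ := this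
    by_cases hp0 : 0 < muRow l κ F i0
    · rw [if_pos hp0] at hi0
      have : muRow l κ F i0 ≤ muRow l κ F k := muRow_antitone hl hκ hlκ hF (by omega)
      omega
    · rw [if_neg hp0] at hi0
      omega
  · rw [muList, List.pairwise_map]
    apply List.Pairwise.imp_of_mem (R := (· < ·))
    · intro a b _ _ hab
      exact muRow_antitone hl hκ hlκ hF (le_of_lt hab)
    · exact List.pairwise_lt_range (n := _)

lemma inShape_muList {l κ : List ℕ} (hl : IsPartition l) (hκ : IsPartition κ)
    (hlκ : subShape l κ) {F : ℕ × ℕ → ℕ} (hF : IsRPP l κ F) {i j : ℕ} :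
    InShape (muList l κ F) (i, j) ↔ j < muRow l κ F i := by
  rw [inShape_iff_getD (isPartition_muList hl hκ hlκ hF), muList_getD hl hκ hlκ hF]

lemma subShape_l_muList {l κ : List ℕ} (hl : IsPartition l) (hκ : IsPartition κ)
    (hlκ : subShape l κ) {F : ℕ × ℕ → ℕ} (hF : IsRPP l κ F) :
    subShape l (muList l κ F) := by
  intro i
  rw [muList_getD hl hκ hlκ hF]
  exact le_max_left _ _

lemma subShape_muList_κ {l κ : List ℕ} (hl : IsPartition l) (hκ : IsPartition κ)
    (hlκ : subShape l κ) {F : ℕ × ℕ → ℕ} (hF : IsRPP l κ F) :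
    subShape (muList l κ F) κ := by
  intro i
  rw [muList_getD hl hκ hlκ hF]
  apply max_le (hlκ i)
  apply Finset.sup_le
  intro j hj
  rw [Finset.mem_range] at hj
  split <;> omega

/-! ### The bijection maps -/

open Classical in
/-- From a pair (strictly elegant `S` on `μ/λ`, elegant `E` on `ν/μᵗ`) to a filling. -/
def phiMap (l ν μ : List ℕ) (S E : ℕ × ℕ → ℕ) : ℕ × ℕ → ℕ := fun b =>
  if Skew l μ b then b.1 + b.2 + 1 - S b
  else if Skew μ (conj ν) b then b.2 + 1 - E (b.2, b.1) else 0

open Classical in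
/-- The strictly elegant filling extracted from a restricted plane partition. -/
def psiS (l κ : List ℕ) (F : ℕ × ℕ → ℕ) : ℕ × ℕ → ℕ := fun b =>
  if Skew l (muList l κ F) b then b.1 + b.2 + 1 - F b else 0

open Classical in
/-- The elegant filling extracted from a restricted plane partition. -/
def psiE (l ν : List ℕ) (F : ℕ × ℕ → ℕ) : ℕ × ℕ → ℕ := fun p =>
  if Skew (conj (muList l (conj ν) F)) ν p then p.1 + 1 - F (p.2, p.1) else 0

lemma skew_transpose {μ ν : List ℕ} (hμ : IsPartition μ) (hν : IsPartition ν) (a b : ℕ) :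
    Skew (conj μ) ν (a, b) ↔ Skew μ (conj ν) (b, a) := by
  unfold Skew
  rw [inShape_conj hμ a b, inShape_conj hν b a, inShape_def, inShape_def]

section PsiDirection

variable {l ν : List ℕ} {F : ℕ × ℕ → ℕ}

lemma psi_box (hl : IsPartition l) (hν : IsPartition ν) (h : subShape l (conj ν))
    (hF : IsRPP l (conj ν) F)
    {i j : ℕ} (hsk : Skew l (muList l (conj ν) F) (i, j)) :
    Skew l (conj ν) (i, j) ∧ j < F (i, j) ∧ F (i, j) ≤ i + j := by
  have hκ : IsPartition (conj ν) := isPartition_conj hν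
  have hmem : j < muRow l (conj ν) F i := by
    have h1 := hsk.1
    rwa [inShape_muList hl hκ h hF] at h1
  rw [lt_muRow_iff hl hκ hF] at hmem
  have hnl : ¬ j < l.getD i 0 := fun hc => hsk.2 ((inShape_iff_getD hl).mpr hc)
  rcases hmem with hc | ⟨h1, h2⟩
  · exact absurd hc hnl
  · have hskκ : Skew l (conj ν) (i, j) := ⟨(inShape_iff_getD hκ).mpr h1,
      fun hc => absurd ((inShape_iff_getD hl).mp hc) hnl⟩
    exact ⟨hskκ, h2, rpp_le_add hl hκ hF i j hskκ⟩

lemma psi_obox (hl : IsPartition l) (hν : IsPartition ν) (h : subShape l (conj ν))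
    (hF : IsRPP l (conj ν) F)
    {i j : ℕ} (hsk : Skew (muList l (conj ν) F) (conj ν) (i, j)) :
    Skew l (conj ν) (i, j) ∧ 1 ≤ F (i, j) ∧ F (i, j) ≤ j := by
  have hκ : IsPartition (conj ν) := isPartition_conj hν
  have hmem : ¬ j < muRow l (conj ν) F i := by
    intro hc
    exact hsk.2 ((inShape_muList hl hκ h hF).mpr hc)
  rw [lt_muRow_iff hl hκ hF] at hmem
  push_neg at hmem
  have hκij : j < (conj ν).getD i 0 := (inShape_iff_getD hκ).mp hsk.1
  have hskκ : Skew l (conj ν) (i, j) :=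
    ⟨hsk.1, fun hc => by have := (inShape_iff_getD hl).mp hc; omega⟩
  exact ⟨hskκ, hF.2.1 _ hskκ, by have := hmem.2 hκij; omega⟩

lemma psi_strictElegant (hl : IsPartition l) (hν : IsPartition ν) (h : subShape l (conj ν))
    (hF : IsRPP l (conj ν) F) :
    IsStrictElegant l (muList l (conj ν) F) (psiS l (conj ν) F) := by
  have hκ : IsPartition (conj ν) := isPartition_conj hν
  refine ⟨?_, ?_, ?_, ?_⟩
  · intro b hb
    simp only [psiS]
    rw [if_neg hb]
  · rintro ⟨i, j⟩ hsk
    obtain ⟨hskκ, h1, h2⟩ := psi_box hl hν h hF hsk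
    simp only [psiS]
    rw [if_pos hsk]
    show 1 ≤ i + j + 1 - F (i, j) ∧ i + j + 1 - F (i, j) ≤ i
    omega
  · intro i j hsk hsk'
    obtain ⟨hskκ, h1, h2⟩ := psi_box hl hν h hF hsk
    obtain ⟨hskκ', h1', h2'⟩ := psi_box hl hν h hF hsk'
    have hrow : F (i, j + 1) ≤ F (i, j) := hF.2.2.1 i j hskκ hskκ'
    simp only [psiS]
    rw [if_pos hsk, if_pos hsk']
    show i + j + 1 - F (i, j) < i + (j + 1) + 1 - F (i, j + 1)
    omega
  · intro i j hsk hsk'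
    obtain ⟨hskκ, h1, h2⟩ := psi_box hl hν h hF hsk
    obtain ⟨hskκ', h1', h2'⟩ := psi_box hl hν h hF hsk'
    have hcol : F (i + 1, j) ≤ F (i, j) := hF.2.2.2.1 i j hskκ hskκ'
    simp only [psiS]
    rw [if_pos hsk, if_pos hsk']
    show i + j + 1 - F (i, j) < (i + 1) + j + 1 - F (i + 1, j)
    omega

lemma psi_elegant (hl : IsPartition l) (hν : IsPartition ν) (h : subShape l (conj ν))
    (hF : IsRPP l (conj ν) F) :
    IsElegant (conj (muList l (conj ν) F)) ν (psiE l ν F) := by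
  have hκ : IsPartition (conj ν) := isPartition_conj hν
  have hμ : IsPartition (muList l (conj ν) F) := isPartition_muList hl hκ h hF
  have htr : ∀ a b : ℕ, Skew (conj (muList l (conj ν) F)) ν (a, b) ↔
      Skew (muList l (conj ν) F) (conj ν) (b, a) := fun a b => skew_transpose hμ hν a b
  refine ⟨?_, ?_, ?_, ?_⟩
  · intro b hb
    simp only [psiE]
    rw [if_neg hb]
  · rintro ⟨a, b⟩ hsk
    obtain ⟨hskκ, h1, h2⟩ := psi_obox hl hν h hF ((htr a b).mp hsk)
    simp only [psiE]
    rw [if_pos hsk]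
    show 1 ≤ a + 1 - F (b, a) ∧ a + 1 - F (b, a) ≤ a
    omega
  · intro a b hsk hsk'
    obtain ⟨hskκ, h1, h2⟩ := psi_obox hl hν h hF ((htr a b).mp hsk)
    obtain ⟨hskκ', h1', h2'⟩ := psi_obox hl hν h hF ((htr a (b+1)).mp hsk')
    have hcol : F (b + 1, a) ≤ F (b, a) := hF.2.2.2.1 b a hskκ hskκ'
    simp only [psiE]
    rw [if_pos hsk, if_pos hsk']
    show a + 1 - F (b, a) ≤ a + 1 - F (b + 1, a)
    omega
  · intro a b hsk hsk'
    obtain ⟨hskκ, h1, h2⟩ := psi_obox hl hν h hF ((htr a b).mp hsk)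
    obtain ⟨hskκ', h1', h2'⟩ := psi_obox hl hν h hF ((htr (a+1) b).mp hsk')
    have hrow : F (b, a + 1) ≤ F (b, a) := hF.2.2.1 b a hskκ hskκ'
    simp only [psiE]
    rw [if_pos hsk, if_pos hsk']
    show a + 1 - F (b, a) < (a + 1) + 1 - F (b, a + 1)
    omega

lemma psi_subShape_conj (hl : IsPartition l) (hν : IsPartition ν) (h : subShape l (conj ν))
    (hF : IsRPP l (conj ν) F) :
    subShape (conj (muList l (conj ν) F)) ν := by
  have hκ : IsPartition (conj ν) := isPartition_conj hν
  have hμ : IsPartition (muList l (conj ν) F) := isPartition_muList hl hκ h hF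
  exact (subShape_conj_right hμ hν).mpr (subShape_muList_κ hl hκ h hF)

lemma phi_psi (hl : IsPartition l) (hν : IsPartition ν) (h : subShape l (conj ν))
    (hF : IsRPP l (conj ν) F) :
    phiMap l ν (muList l (conj ν) F) (psiS l (conj ν) F) (psiE l ν F) = F := by
  have hκ : IsPartition (conj ν) := isPartition_conj hν
  have hμ : IsPartition (muList l (conj ν) F) := isPartition_muList hl hκ h hF
  funext b
  obtain ⟨i, j⟩ := b
  by_cases h1 : Skew l (muList l (conj ν) F) (i, j)
  · obtain ⟨hskκ, hb1, hb2⟩ := psi_box hl hν h hF h1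
    simp only [phiMap, psiS]
    rw [if_pos h1, if_pos h1]
    show i + j + 1 - (i + j + 1 - F (i, j)) = F (i, j)
    omega
  · by_cases h2 : Skew (muList l (conj ν) F) (conj ν) (i, j)
    · obtain ⟨hskκ, hb1, hb2⟩ := psi_obox hl hν h hF h2
      have htr : Skew (conj (muList l (conj ν) F)) ν (j, i) :=
        (skew_transpose hμ hν j i).mpr h2
      simp only [phiMap, psiE]
      rw [if_neg h1, if_pos h2, if_pos htr]
      show j + 1 - (j + 1 - F (i, j)) = F (i, j)
      omega
    · simp only [phiMap]
      rw [if_neg h1, if_neg h2]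
      symm
      apply hF.1
      intro hc
      by_cases hin : InShape (muList l (conj ν) F) (i, j)
      · exact h1 ⟨hin, hc.2⟩
      · exact h2 ⟨hc.1, hin⟩

end PsiDirection

end Stmt10Aux

section PhiDirection

variable {l ν μ : List ℕ} {S E : ℕ × ℕ → ℕ}

lemma hBox_pair (l : List ℕ) (i j : ℕ) :
    hBox l (i, j) = ((Finset.range i).filter fun r => j < l.getD r 0 ∧ r < l.length).card
      + ((Finset.range j).filter fun c => c < l.getD i 0 ∧ i < l.length).card := rfl

lemma corner_snd_card (hl : IsPartition l) {i j : ℕ} (hcor : OuterCorner l (i, j)) :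
    ((Finset.range j).filter fun c => c < l.getD i 0 ∧ i < l.length).card = j := by
  have hc1 : i ≤ l.length := hcor.1
  have hc2 : j = l.getD i 0 := hcor.2.1
  rcases Nat.lt_or_ge i l.length with hil | hil
  · rw [Finset.filter_true_of_mem, Finset.card_range]
    intro c hc
    exact ⟨by rw [← hc2]; exact Finset.mem_range.mp hc, hil⟩
  · have hj0 : j = 0 := by rw [hc2, List.getD_eq_default _ _ (by omega)]
    subst hj0
    simp

lemma strictElegant_col_lb (hl : IsPartition l) (hμp : IsPartition μ)
    (hS : IsStrictElegant l μ S) :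
    ∀ t i j, t ≤ i → Skew l μ (i, j) → (∀ k, 1 ≤ k → k ≤ t → l.getD (i - k) 0 ≤ j) →
      t + 1 ≤ S (i, j) := by
  intro t
  induction t with
  | zero =>
    intro i j _ hsk _
    exact (hS.2.1 (i, j) hsk).1
  | succ t ih =>
    intro i j hti hsk hks
    have hi1 : 1 ≤ i := by omega
    have hup_in : InShape μ (i - 1, j) := inShape_mono hμp hsk.1 (by omega) (le_refl j)
    have hup_nl : ¬ InShape l (i - 1, j) := by
      intro hc
      have h1 := (inShape_iff_getD hl).mp hc
      have h2 := hks 1 (by omega) (by omega)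
      omega
    have hsk1 : Skew l μ (i - 1, j) := ⟨hup_in, hup_nl⟩
    have hih : t + 1 ≤ S (i - 1, j) := by
      apply ih (i - 1) j (by omega) hsk1
      intro k hk1 hk2
      have e : i - 1 - k = i - (k + 1) := by omega
      rw [e]
      exact hks (k + 1) (by omega) (by omega)
    have hstep : S (i - 1, j) < S (i - 1 + 1, j) := hS.2.2.2 (i - 1) j hsk1
      (by rw [show i - 1 + 1 = i by omega]; exact hsk)
    rw [show i - 1 + 1 = i by omega] at hstep
    omega

lemma phi_corner_inner (hl : IsPartition l) (hμp : IsPartition μ)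
    (hS : IsStrictElegant l μ S) {i j : ℕ} (hsk : Skew l μ (i, j))
    (hcor : OuterCorner l (i, j)) :
    i + j + 1 - S (i, j) ≤ hBox l (i, j) := by
  rw [hBox_pair, corner_snd_card hl hcor]
  set A := ((Finset.range i).filter fun r => j < l.getD r 0 ∧ r < l.length).card with hA
  have hSlb : (i - A) + 1 ≤ S (i, j) := by
    apply strictElegant_col_lb hl hμp hS (i - A) i j (by omega) hsk
    intro k hk1 hk2
    by_contra hcc
    push_neg at hcc
    have hsub : Finset.range (i - k + 1) ⊆
        (Finset.range i).filter fun r => j < l.getD r 0 ∧ r < l.length := by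
      intro r hr
      rw [Finset.mem_range] at hr
      have hrk : r ≤ i - k := by omega
      have hge : l.getD (i - k) 0 ≤ l.getD r 0 := part_getD_le hl hrk
      have hpos : r < l.length := (part_getD_pos hl).mp (by omega)
      rw [Finset.mem_filter, Finset.mem_range]
      exact ⟨by omega, by omega, hpos⟩
    have hcard := Finset.card_le_card hsub
    rw [Finset.card_range] at hcard
    omega
  have hSub : S (i, j) ≤ i := (hS.2.1 (i, j) hsk).2
  omega

lemma phi_inner (hν : IsPartition ν) (hS : IsStrictElegant l μ S) {i j : ℕ}
    (hsk : Skew l μ (i, j)) :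
    phiMap l ν μ S E (i, j) = i + j + 1 - S (i, j) ∧
      j + 1 ≤ phiMap l ν μ S E (i, j) ∧ phiMap l ν μ S E (i, j) ≤ i + j := by
  have hb1 : 1 ≤ S (i, j) := (hS.2.1 (i, j) hsk).1
  have hb2 : S (i, j) ≤ i := (hS.2.1 (i, j) hsk).2
  have hv : phiMap l ν μ S E (i, j) = i + j + 1 - S (i, j) := by
    simp only [phiMap]
    rw [if_pos hsk]
  exact ⟨hv, by omega, by omega⟩

lemma phi_outer (hν : IsPartition ν) (hμp : IsPartition μ) (hE : IsElegant (conj μ) ν E)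
    {i j : ℕ} (hsk : Skew μ (conj ν) (i, j)) :
    phiMap l ν μ S E (i, j) = j + 1 - E (j, i) ∧
      1 ≤ phiMap l ν μ S E (i, j) ∧ phiMap l ν μ S E (i, j) ≤ j ∧
      1 ≤ E (j, i) ∧ E (j, i) ≤ j := by
  have hskT : Skew (conj μ) ν (j, i) := (skew_transpose hμp hν j i).mpr hsk
  have hb1 : 1 ≤ E (j, i) := (hE.2.1 (j, i) hskT).1
  have hb2 : E (j, i) ≤ j := (hE.2.1 (j, i) hskT).2
  have hnsk : ¬ Skew l μ (i, j) := fun hc => hsk.2 hc.1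
  have hv : phiMap l ν μ S E (i, j) = j + 1 - E (j, i) := by
    simp only [phiMap]
    rw [if_neg hnsk, if_pos hsk]
  exact ⟨hv, by omega, by omega, hb1, hb2⟩

lemma phi_wd (hl : IsPartition l) (hν : IsPartition ν) (hμp : IsPartition μ)
    (hlμ : subShape l μ) (hμκ : subShape μ (conj ν))
    (hS : IsStrictElegant l μ S) (hE : IsElegant (conj μ) ν E) :
    IsRPP l (conj ν) (phiMap l ν μ S E) := by
  have hκ : IsPartition (conj ν) := isPartition_conj hν
  refine ⟨?_, ?_, ?_, ?_, ?_⟩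
  · -- zero off skew
    rintro ⟨i, j⟩ hb
    simp only [phiMap]
    rw [if_neg, if_neg]
    · intro hc
      exact hb ⟨hc.1, fun hcl => hc.2 (subShape_inShape hμp hlμ hcl)⟩
    · intro hc
      exact hb ⟨subShape_inShape hκ hμκ hc.1, hc.2⟩
  · -- positive on skew
    rintro ⟨i, j⟩ hsk
    by_cases hin : InShape μ (i, j)
    · have h1 := (phi_inner (E := E) hν hS ⟨hin, hsk.2⟩).2.1
      omega
    · have h1 := (phi_outer (l := l) (S := S) hν hμp hE ⟨hsk.1, hin⟩).2.1
      omega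
  · -- rows weakly decreasing
    intro i j hsk hsk'
    by_cases hin' : InShape μ (i, j + 1)
    · have hin : InShape μ (i, j) := inShape_mono hμp hin' (le_refl i) (by omega)
      have hskm : Skew l μ (i, j) := ⟨hin, hsk.2⟩
      have hskm' : Skew l μ (i, j + 1) := ⟨hin', hsk'.2⟩
      have hstep : S (i, j) < S (i, j + 1) := hS.2.2.1 i j hskm hskm'
      obtain ⟨hv, _, hub⟩ := phi_inner (E := E) hν hS hskm
      obtain ⟨hv', hlb', hub'⟩ := phi_inner (E := E) hν hS hskm'
      have hb2 : S (i, j) ≤ i := (hS.2.1 (i, j) hskm).2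
      have hb1' : 1 ≤ S (i, j + 1) := (hS.2.1 (i, j + 1) hskm').1
      omega
    · have hsko' : Skew μ (conj ν) (i, j + 1) := ⟨hsk'.1, hin'⟩
      obtain ⟨hv', hlb', hub', hEl', hEu'⟩ := phi_outer (l := l) (S := S) hν hμp hE hsko'
      by_cases hin : InShape μ (i, j)
      · have h1 := (phi_inner (E := E) hν hS ⟨hin, hsk.2⟩).2.1
        omega
      · have hsko : Skew μ (conj ν) (i, j) := ⟨hsk.1, hin⟩
        obtain ⟨hv, hlb, hub, hEl, hEu⟩ := phi_outer (l := l) (S := S) hν hμp hE hsko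
        have hTs : Skew (conj μ) ν (j, i) := (skew_transpose hμp hν j i).mpr hsko
        have hTs' : Skew (conj μ) ν (j + 1, i) := (skew_transpose hμp hν (j+1) i).mpr hsko'
        have hstep : E (j, i) < E (j + 1, i) := hE.2.2.2 j i hTs hTs'
        omega
  · -- columns weakly decreasing
    intro i j hsk hsk'
    by_cases hin' : InShape μ (i + 1, j)
    · have hin : InShape μ (i, j) := inShape_mono hμp hin' (by omega) (le_refl j)
      have hskm : Skew l μ (i, j) := ⟨hin, hsk.2⟩
      have hskm' : Skew l μ (i + 1, j) := ⟨hin', hsk'.2⟩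
      have hstep : S (i, j) < S (i + 1, j) := hS.2.2.2 i j hskm hskm'
      obtain ⟨hv, _, hub⟩ := phi_inner (E := E) hν hS hskm
      obtain ⟨hv', hlb', hub'⟩ := phi_inner (E := E) hν hS hskm'
      have hb2 : S (i, j) ≤ i := (hS.2.1 (i, j) hskm).2
      have hb1' : 1 ≤ S (i + 1, j) := (hS.2.1 (i + 1, j) hskm').1
      omega
    · have hsko' : Skew μ (conj ν) (i + 1, j) := ⟨hsk'.1, hin'⟩
      obtain ⟨hv', hlb', hub', hEl', hEu'⟩ := phi_outer (l := l) (S := S) hν hμp hE hsko'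
      by_cases hin : InShape μ (i, j)
      · have h1 := (phi_inner (E := E) hν hS ⟨hin, hsk.2⟩).2.1
        omega
      · have hsko : Skew μ (conj ν) (i, j) := ⟨hsk.1, hin⟩
        obtain ⟨hv, hlb, hub, hEl, hEu⟩ := phi_outer (l := l) (S := S) hν hμp hE hsko
        have hTs : Skew (conj μ) ν (j, i) := (skew_transpose hμp hν j i).mpr hsko
        have hTs' : Skew (conj μ) ν (j, i + 1) := (skew_transpose hμp hν j (i+1)).mpr hsko'
        have hstep : E (j, i) ≤ E (j, i + 1) := hE.2.2.1 j i hTs hTs'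
        omega
  · -- corner bound
    rintro ⟨i, j⟩ hsk hcor
    by_cases hin : InShape μ (i, j)
    · have hskm : Skew l μ (i, j) := ⟨hin, hsk.2⟩
      obtain ⟨hv, _, _⟩ := phi_inner (E := E) hν hS hskm
      rw [hv]
      exact phi_corner_inner hl hμp hS hskm hcor
    · have hsko : Skew μ (conj ν) (i, j) := ⟨hsk.1, hin⟩
      obtain ⟨hv, hlb, hub, _, _⟩ := phi_outer (l := l) (S := S) hν hμp hE hsko
      rw [hBox_pair, corner_snd_card hl hcor]
      omega

lemma mu_of_phi (hl : IsPartition l) (hν : IsPartition ν) (hμp : IsPartition μ)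
    (hlμ : subShape l μ) (hμκ : subShape μ (conj ν))
    (hS : IsStrictElegant l μ S) (hE : IsElegant (conj μ) ν E) :
    muList l (conj ν) (phiMap l ν μ S E) = μ := by
  have hκ : IsPartition (conj ν) := isPartition_conj hν
  have hlκ : subShape l (conj ν) := fun i => le_trans (hlμ i) (hμκ i)
  have hP := phi_wd hl hν hμp hlμ hμκ hS hE
  apply part_ext (isPartition_muList hl hκ hlκ hP) hμp
  intro i
  rw [muList_getD hl hκ hlκ hP]
  apply Nat.le_antisymm
  · apply le_of_forall_lt
    intro x hx
    rw [lt_muRow_iff hl hκ hP] at hx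
    rcases hx with hx | ⟨hx1, hx2⟩
    · exact lt_of_lt_of_le hx (hlμ i)
    · by_contra hge
      have hnin : ¬ InShape μ (i, x) := fun hc => hge ((inShape_iff_getD hμp).mp hc)
      have hsko : Skew μ (conj ν) (i, x) := ⟨(inShape_iff_getD hκ).mpr hx1, hnin⟩
      have := (phi_outer (l := l) (S := S) hν hμp hE hsko).2.2.1
      omega
  · apply le_of_forall_lt
    intro x hx
    rw [lt_muRow_iff hl hκ hP]
    by_cases hxl : x < l.getD i 0
    · exact Or.inl hxl
    · right
      have hskm : Skew l μ (i, x) := ⟨(inShape_iff_getD hμp).mpr hx,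
        fun hc => hxl ((inShape_iff_getD hl).mp hc)⟩
      have h1 := (phi_inner (E := E) hν hS hskm).2.1
      have h2 := hμκ i
      exact ⟨by omega, by omega⟩

lemma psiS_of_phi (hl : IsPartition l) (hν : IsPartition ν) (hμp : IsPartition μ)
    (hlμ : subShape l μ) (hμκ : subShape μ (conj ν))
    (hS : IsStrictElegant l μ S) (hE : IsElegant (conj μ) ν E) :
    psiS l (conj ν) (phiMap l ν μ S E) = S := by
  funext b
  obtain ⟨i, j⟩ := b
  simp only [psiS]
  rw [mu_of_phi hl hν hμp hlμ hμκ hS hE]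
  by_cases hsk : Skew l μ (i, j)
  · rw [if_pos hsk]
    obtain ⟨hv, _, _⟩ := phi_inner (E := E) hν hS hsk
    rw [hv]
    have hb1 : 1 ≤ S (i, j) := (hS.2.1 (i, j) hsk).1
    have hb2 : S (i, j) ≤ i := (hS.2.1 (i, j) hsk).2
    show i + j + 1 - (i + j + 1 - S (i, j)) = S (i, j)
    omega
  · rw [if_neg hsk]
    exact (hS.1 _ hsk).symm

lemma psiE_of_phi (hl : IsPartition l) (hν : IsPartition ν) (hμp : IsPartition μ)
    (hlμ : subShape l μ) (hμκ : subShape μ (conj ν))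
    (hS : IsStrictElegant l μ S) (hE : IsElegant (conj μ) ν E) :
    psiE l ν (phiMap l ν μ S E) = E := by
  funext p
  obtain ⟨a, b⟩ := p
  simp only [psiE]
  rw [mu_of_phi hl hν hμp hlμ hμκ hS hE]
  by_cases hsk : Skew (conj μ) ν (a, b)
  · rw [if_pos hsk]
    have hskT : Skew μ (conj ν) (b, a) := (skew_transpose hμp hν a b).mp hsk
    obtain ⟨hv, _, _, hEl, hEu⟩ := phi_outer (l := l) (S := S) hν hμp hE hskT
    rw [hv]
    show a + 1 - (a + 1 - E (a, b)) = E (a, b)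
    omega
  · rw [if_neg hsk]
    exact (hE.1 _ hsk).symm

end PhiDirection

/-! ### Finiteness and counting -/

lemma finite_fillings (s : Finset (ℕ × ℕ)) (Bd : ℕ) :
    {F : ℕ × ℕ → ℕ | (∀ b, b ∉ s → F b = 0) ∧ ∀ b, F b ≤ Bd}.Finite := by
  have h1 : (Set.pi Set.univ (fun _ : s => Set.Iic Bd)).Finite :=
    Set.Finite.pi (fun _ => Set.finite_Iic Bd)
  apply Set.Finite.of_finite_image (f := fun F (b : s) => F b.1)
  · apply h1.subset
    rintro g ⟨F, hF, rfl⟩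
    intro b _
    exact hF.2 b.1
  · rintro F ⟨hF0, _⟩ G ⟨hG0, _⟩ heq
    funext b
    by_cases hb : b ∈ s
    · exact congrFun heq ⟨b, hb⟩
    · rw [hF0 b hb, hG0 b hb]

lemma finite_strictElegant (l μ : List ℕ) : {S : ℕ × ℕ → ℕ | IsStrictElegant l μ S}.Finite := by
  apply (finite_fillings (shapeFinset μ) μ.length).subset
  intro S hS
  constructor
  · intro b hb
    apply hS.1
    intro hc
    exact hb ((mem_shapeFinset μ b).mpr hc.1)
  · intro b
    by_cases hb : Skew l μ b
    · have h1 := (hS.2.1 b hb).2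
      have h2 := hb.1.1
      omega
    · rw [hS.1 b hb]
      exact Nat.zero_le _

lemma finite_elegant (m ν : List ℕ) : {E : ℕ × ℕ → ℕ | IsElegant m ν E}.Finite := by
  apply (finite_fillings (shapeFinset ν) ν.length).subset
  intro E hE
  constructor
  · intro b hb
    apply hE.1
    intro hc
    exact hb ((mem_shapeFinset ν b).mpr hc.1)
  · intro b
    by_cases hb : Skew m ν b
    · have h1 := (hE.2.1 b hb).2
      have h2 := hb.1.1
      omega
    · rw [hE.1 b hb]
      exact Nat.zero_le _

lemma finite_RPP {l κ : List ℕ} (hl : IsPartition l) (hκ : IsPartition κ) :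
    {F : ℕ × ℕ → ℕ | IsRPP l κ F}.Finite := by
  apply (finite_fillings (shapeFinset κ) (κ.length + κ.getD 0 0)).subset
  intro F hF
  constructor
  · intro b hb
    apply hF.1
    intro hc
    exact hb ((mem_shapeFinset κ b).mpr hc.1)
  · intro b
    by_cases hb : Skew l κ b
    · obtain ⟨i, j⟩ := b
      have h1 := rpp_le_add hl hκ hF i j hb
      have h2 : i < κ.length := hb.1.1
      have h3 : j < κ.getD i 0 := hb.1.2
      have h4 : κ.getD i 0 ≤ κ.getD 0 0 := part_getD_le hκ (Nat.zero_le i)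
      omega
    · rw [hF.1 b hb]
      exact Nat.zero_le _

lemma finite_muSet {l ν : List ℕ} (hν : IsPartition ν) :
    {μ : List ℕ | IsPartition μ ∧ subShape l μ ∧ subShape (conj μ) ν}.Finite := by
  set κ := conj ν with hκdef
  have hκ : IsPartition κ := isPartition_conj hν
  apply Set.Finite.of_finite_image
    (f := fun (μ : List ℕ) (i : Fin (κ.length + 1)) => μ.getD i 0)
  · apply (Set.Finite.pi (fun _ : Fin (κ.length + 1) => Set.finite_Iic (κ.getD 0 0))).subset
    rintro g ⟨μ, hμ, rfl⟩
    intro i _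
    have hμκ : subShape μ κ := (subShape_conj_right hμ.1 hν).mp hμ.2.2
    have h1 : μ.getD i 0 ≤ κ.getD (i : ℕ) 0 := hμκ i
    have h2 : κ.getD (i : ℕ) 0 ≤ κ.getD 0 0 := part_getD_le hκ (Nat.zero_le _)
    exact le_trans h1 h2
  · rintro μ₁ hμ₁ μ₂ hμ₂ heq
    have hμκ₁ : subShape μ₁ κ := (subShape_conj_right hμ₁.1 hν).mp hμ₁.2.2
    have hμκ₂ : subShape μ₂ κ := (subShape_conj_right hμ₂.1 hν).mp hμ₂.2.2
    have hlen : ∀ μ' : List ℕ, IsPartition μ' → subShape μ' κ → μ'.length ≤ κ.length :=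
      fun μ' h1 h2 => length_le_of_subShape h1 hκ h2
    apply part_ext hμ₁.1 hμ₂.1
    intro i
    by_cases hi : i < κ.length + 1
    · exact congrFun heq ⟨i, hi⟩
    · have e1 : μ₁.getD i 0 = 0 := List.getD_eq_default _ _ (by
        have := hlen μ₁ hμ₁.1 hμκ₁; omega)
      have e2 : μ₂.getD i 0 = 0 := List.getD_eq_default _ _ (by
        have := hlen μ₂ hμ₂.1 hμκ₂; omega)
      rw [e1, e2]

lemma ncard_sprod {α β : Type*} (s : Set α) (t : Set β) :
    (s ×ˢ t).ncard = s.ncard * t.ncard := by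
  rw [← Nat.card_coe_set_eq, ← Nat.card_coe_set_eq, ← Nat.card_coe_set_eq,
    ← Nat.card_prod]
  exact Nat.card_congr (Equiv.Set.prod s t)

lemma ncard_finset_biUnion {α γ : Type*} (A : Finset γ) (f : γ → Set α)
    (hfin : ∀ g ∈ A, (f g).Finite)
    (hdisj : ∀ g₁ ∈ A, ∀ g₂ ∈ A, g₁ ≠ g₂ → Disjoint (f g₁) (f g₂)) :
    (⋃ g ∈ A, f g).ncard = ∑ g ∈ A, (f g).ncard := by
  classical
  induction A using Finset.induction with
  | empty => simp
  | @insert a A hnotmem ih =>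
    rw [Finset.sum_insert hnotmem]
    have hbu : (⋃ g ∈ insert a A, f g) = f a ∪ ⋃ g ∈ A, f g := by
      simp [Set.biUnion_insert]
    rw [hbu]
    have hdisj2 : Disjoint (f a) (⋃ g ∈ A, f g) := by
      rw [Set.disjoint_left]
      intro x hxa hxu
      rw [Set.mem_iUnion₂] at hxu
      obtain ⟨g, hg, hxg⟩ := hxu
      have hne : a ≠ g := fun hc => hnotmem (hc ▸ hg)
      exact (Set.disjoint_left.mp (hdisj a (Finset.mem_insert_self a A) g
        (Finset.mem_insert_of_mem hg) hne)) hxa hxg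
    have hfin1 : (f a).Finite := hfin a (Finset.mem_insert_self a A)
    have hfin2 : (⋃ g ∈ A, f g).Finite :=
      Set.Finite.biUnion A.finite_toSet (fun g hg => hfin g (Finset.mem_insert_of_mem hg))
    rw [Set.ncard_union_eq hdisj2 hfin1 hfin2]
    rw [ih (fun g hg => hfin g (Finset.mem_insert_of_mem hg))
      (fun g₁ hg₁ g₂ hg₂ hne => hdisj g₁ (Finset.mem_insert_of_mem hg₁) g₂
        (Finset.mem_insert_of_mem hg₂) hne)]

/-! ### STATEMENT 10: `Σ_μ r_{μλ} · f^{μᵗ}_ν = P^λ_{νᵗ}`,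
the sum over all partitions `μ` with `λ ⊆ μ` and `μᵗ ⊆ ν`: the number of pairs of a
strictly elegant filling of `μ/λ` and an elegant filling of `ν/μᵗ` equals the number of
restricted plane partitions of `νᵗ/λ`. -/
theorem stmt10 (l ν : List ℕ) (hl : IsPartition l) (hν : IsPartition ν)
    (h : subShape l (conj ν)) :
    (∑' μ : List ℕ,
      indic (IsPartition μ ∧ subShape l μ ∧ subShape (conj μ) ν)
        (rENum l μ * fENum (conj μ) ν)) = Pnum l (conj ν) := by
  classical
  have hκ : IsPartition (conj ν) := isPartition_conj hν
  have hAfin := finite_muSet (l := l) hν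
  -- the image pieces of the bijection
  set Pairs : List ℕ → Set ((ℕ × ℕ → ℕ) × (ℕ × ℕ → ℕ)) := fun μ =>
    {S | IsStrictElegant l μ S} ×ˢ {E | IsElegant (conj μ) ν E} with hPairs
  set Im : List ℕ → Set (ℕ × ℕ → ℕ) := fun μ =>
    (fun p : (ℕ × ℕ → ℕ) × (ℕ × ℕ → ℕ) => phiMap l ν μ p.1 p.2) '' Pairs μ with hIm
  -- step 1 : tsum over finite support
  have step1 : (∑' μ : List ℕ,
      indic (IsPartition μ ∧ subShape l μ ∧ subShape (conj μ) ν)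
        (rENum l μ * fENum (conj μ) ν))
      = ∑ μ ∈ hAfin.toFinset, rENum l μ * fENum (conj μ) ν := by
    rw [tsum_eq_sum (s := hAfin.toFinset) ?_]
    · apply Finset.sum_congr rfl
      intro μ hμ
      rw [Set.Finite.mem_toFinset] at hμ
      unfold indic
      exact if_pos hμ
    · intro μ hμ
      rw [Set.Finite.mem_toFinset] at hμ
      unfold indic
      exact if_neg hμ
  -- step 2 : each piece has the right cardinality
  have step2 : ∀ μ ∈ hAfin.toFinset, (Im μ).ncard = rENum l μ * fENum (conj μ) ν := by
    intro μ hμA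
    rw [Set.Finite.mem_toFinset] at hμA
    obtain ⟨hμ1, hμ2, hμ3⟩ := hμA
    have hμκ : subShape μ (conj ν) := (subShape_conj_right hμ1 hν).mp hμ3
    have hinj : Set.InjOn (fun p : (ℕ × ℕ → ℕ) × (ℕ × ℕ → ℕ) => phiMap l ν μ p.1 p.2)
        (Pairs μ) := by
      rintro p hp q hq heq
      simp only [hPairs, Set.mem_prod, Set.mem_setOf_eq] at hp hq
      simp only at heq
      have e1 : p.1 = q.1 := by
        have f1 := psiS_of_phi hl hν hμ1 hμ2 hμκ hp.1 hp.2
        have f2 := psiS_of_phi hl hν hμ1 hμ2 hμκ hq.1 hq.2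
        rw [← f1, ← f2, heq]
      have e2 : p.2 = q.2 := by
        have f1 := psiE_of_phi hl hν hμ1 hμ2 hμκ hp.1 hp.2
        have f2 := psiE_of_phi hl hν hμ1 hμ2 hμκ hq.1 hq.2
        rw [← f1, ← f2, heq]
      exact Prod.ext e1 e2
    rw [hIm]
    simp only
    rw [Set.ncard_image_of_injOn hinj, hPairs]
    simp only
    rw [ncard_sprod]
    rfl
  -- step 3 : the pieces cover the restricted plane partitions
  have step3 : {F : ℕ × ℕ → ℕ | IsRPP l (conj ν) F} = ⋃ μ ∈ hAfin.toFinset, Im μ := by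
    ext F
    simp only [Set.mem_setOf_eq, Set.mem_iUnion₂]
    constructor
    · intro hF
      refine ⟨muList l (conj ν) F, ?_, ?_⟩
      · rw [Set.Finite.mem_toFinset]
        exact ⟨isPartition_muList hl hκ h hF, subShape_l_muList hl hκ h hF,
          psi_subShape_conj hl hν h hF⟩
      · rw [hIm]
        refine ⟨(psiS l (conj ν) F, psiE l ν F), ?_, ?_⟩
        · rw [hPairs]
          exact ⟨psi_strictElegant hl hν h hF, psi_elegant hl hν h hF⟩
        · exact phi_psi hl hν h hF
    · rintro ⟨μ, hμA, hFIm⟩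
      rw [Set.Finite.mem_toFinset] at hμA
      obtain ⟨hμ1, hμ2, hμ3⟩ := hμA
      have hμκ : subShape μ (conj ν) := (subShape_conj_right hμ1 hν).mp hμ3
      rw [hIm] at hFIm
      obtain ⟨p, hp, rfl⟩ := hFIm
      simp only [hPairs, Set.mem_prod, Set.mem_setOf_eq] at hp
      exact phi_wd hl hν hμ1 hμ2 hμκ hp.1 hp.2
  -- step 4 : the pieces are pairwise disjoint
  have step4 : ∀ μ₁ ∈ hAfin.toFinset, ∀ μ₂ ∈ hAfin.toFinset, μ₁ ≠ μ₂ →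
      Disjoint (Im μ₁) (Im μ₂) := by
    intro μ₁ hμ₁ μ₂ hμ₂ hne
    rw [Set.Finite.mem_toFinset] at hμ₁ hμ₂
    rw [Set.disjoint_left]
    rintro F hF1 hF2
    rw [hIm] at hF1 hF2
    obtain ⟨p, hp, rfl⟩ := hF1
    obtain ⟨q, hq, heq⟩ := hF2
    simp only [hPairs, Set.mem_prod, Set.mem_setOf_eq] at hp hq
    have hμκ₁ : subShape μ₁ (conj ν) := (subShape_conj_right hμ₁.1 hν).mp hμ₁.2.2
    have hμκ₂ : subShape μ₂ (conj ν) := (subShape_conj_right hμ₂.1 hν).mp hμ₂.2.2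
    have e1 : muList l (conj ν) (phiMap l ν μ₁ p.1 p.2) = μ₁ :=
      mu_of_phi hl hν hμ₁.1 hμ₁.2.1 hμκ₁ hp.1 hp.2
    have e2 : muList l (conj ν) (phiMap l ν μ₂ q.1 q.2) = μ₂ :=
      mu_of_phi hl hν hμ₂.1 hμ₂.2.1 hμκ₂ hq.1 hq.2
    simp only at heq
    rw [heq] at e2
    exact hne (e1.symm.trans e2)
  -- step 5 : each piece is finite
  have step5 : ∀ μ ∈ hAfin.toFinset, (Im μ).Finite := by
    intro μ _
    rw [hIm]
    apply Set.Finite.image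
    rw [hPairs]
    exact Set.Finite.prod (finite_strictElegant l μ) (finite_elegant (conj μ) ν)
  -- assemble
  rw [step1]
  have hPnum : Pnum l (conj ν) = {F : ℕ × ℕ → ℕ | IsRPP l (conj ν) F}.ncard := by
    unfold Pnum indic
    exact if_pos h
  rw [hPnum, step3, ncard_finset_biUnion _ _ step5 step4]
  exact (Finset.sum_congr rfl step2).symm
end
end

section
/- Let u ∈ S_i and v ∈ S_j be permutations and N ≥ 1. The strictly increasing word 1 2 ⋯ N is a multishuffle of u and v[i] if and only if N = i + j, u = 1 2 ⋯ i, and v = 1 2 ⋯ j. Consequently, in MNSym the coproduct satisfies Δ(R̃_{(n)}) = Σ_{i=0}^{n} R̃_{(i)} ⊗ R̃_{(n−i)} (with R̃_{(0)} := 1). -/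
open scoped BigOperators

noncomputable section

open scoped TensorProduct

/-- The composition `(k)` with one part (`∅` if `k = 0`, with `R̃_∅ = 1`). -/
def oneComp (k : ℕ) : List ℕ := if k = 0 then [] else [k]


/-! ### Auxiliary lemmas for stmt14 -/

private lemma strictMono_surj_fin_id {n : ℕ} (f : Fin n → Fin n) (hf : StrictMono f)
    (hs : Function.Surjective f) : ∀ j, f j = j := by
  haveI : WellFoundedLT (Fin n) := Finite.to_wellFoundedLT
  intro j
  have h1 : j ≤ f j := hf.le_apply
  have h2 : f j ≤ j := by
    have h3 := (StrictMono.orderIsoOfSurjective f hf hs).symm.strictMono.le_apply (x := f j)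
    have he : (StrictMono.orderIsoOfSurjective f hf hs).symm (f j) = j := by
      have h4 : (StrictMono.orderIsoOfSurjective f hf hs) j = f j :=
        congrFun (StrictMono.coe_orderIsoOfSurjective f hf hs) j
      rw [← h4, OrderIso.symm_apply_apply]
    rwa [he] at h3
  exact le_antisymm h2 h1

private lemma idWord_length (n : ℕ) : (idWord n).length = n := by simp [idWord]

private lemma mem_idWord {x n : ℕ} : x ∈ idWord n ↔ 1 ≤ x ∧ x ≤ n := by
  rw [idWord, List.mem_range'_1]; omega

private lemma idWord_pairwise (n : ℕ) : (idWord n).Pairwise (· < ·) :=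
  List.pairwise_lt_range' (s := 1) (n := n)

private lemma multiword_self (l : List ℕ) : IsMultiword l l :=
  ⟨id, monotone_id, Function.surjective_id, fun _ => rfl⟩

private lemma multiword_sorted_eq {w a : List ℕ} (hw : w.Pairwise (· < ·))
    (h : IsMultiword w a) : a = w := by
  obtain ⟨t, hmono, hsurj, hget⟩ := h
  have hst : StrictMono t := by
    intro p q hpq
    rcases (hmono hpq.le).lt_or_eq with h' | h'
    · exact h'
    · exfalso
      have hlt : w.get p < w.get q := List.pairwise_iff_get.mp hw p q hpq
      rw [hget p, hget q, h'] at hlt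
      exact lt_irrefl _ hlt
  have hlen : w.length = a.length := by
    simpa using Fintype.card_of_bijective ⟨hst.injective, hsurj⟩
  have hid : ∀ p : Fin w.length, ((t p : ℕ)) = (p : ℕ) := by
    have hst' : StrictMono (fun p : Fin w.length => Fin.cast hlen.symm (t p)) := by
      intro p q hpq
      have h := hst hpq
      rw [Fin.lt_def] at h ⊢
      exact h
    have hsurj' : Function.Surjective (fun p : Fin w.length => Fin.cast hlen.symm (t p)) := by
      intro q
      obtain ⟨p, hp⟩ := hsurj (Fin.cast hlen q)
      refine ⟨p, ?_⟩
      simp only [hp]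
      exact Fin.ext rfl
    intro p
    exact congrArg Fin.val (strictMono_surj_fin_id _ hst' hsurj' p)
  refine (List.ext_get hlen ?_).symm
  intro m h₂ h₁
  have htm : t ⟨m, h₂⟩ = ⟨m, h₁⟩ := Fin.ext (hid ⟨m, h₂⟩)
  rw [hget ⟨m, h₂⟩, htm]

private lemma permWord_eq_idWord {u : List ℕ} (h : IsPermWord u)
    (hs : u.Pairwise (· < ·)) : u = idWord u.length := by
  haveI : IsAntisymm ℕ (· < ·) := ⟨fun a b h1 h2 => absurd h2 (asymm h1)⟩
  refine List.Perm.eq_of_pairwise (fun a b _ _ h1 h2 => absurd h2 (asymm h1)) hs (idWord_pairwise u.length) ?_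
  have hsub : u ⊆ idWord u.length := fun x hx => mem_idWord.mpr (h.2 x hx)
  exact (h.1.subperm hsub).perm_of_length_le (by rw [idWord_length])

private lemma descComp_cons (a : ℕ) (t : List ℕ) :
    descComp (a :: t) = (match descComp t, t with
      | _, [] => [1]
      | c :: cs, b :: _ => if b < a then 1 :: c :: cs else (c + 1) :: cs
      | [], _ :: _ => []) := rfl

private lemma descComp_range' (s k : ℕ) :
    descComp (List.range' s k) = if k = 0 then [] else [k] := by
  induction k generalizing s with
  | zero => rfl
  | succ k ih =>
    rw [List.range'_succ]
    cases k with
    | zero => rfl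
    | succ m =>
      have h := ih (s + 1)
      rw [List.range'_succ] at h ⊢
      simp only [Nat.succ_ne_zero, if_false] at h ⊢
      rw [descComp_cons, h]
      have hns : ¬ (s + 1 < s) := by omega
      simp [hns]

private lemma descComp_idWord (k : ℕ) : descComp (idWord k) = oneComp k := by
  rw [idWord, descComp_range', oneComp]

private lemma shiftWord_idWord (i j : ℕ) :
    shiftWord i (idWord j) = List.range' (i + 1) j := by
  have h : ((· + i) : ℕ → ℕ) = (fun x => i + x) := funext fun x => Nat.add_comm x i
  rw [shiftWord, idWord, h, List.map_add_range']

private lemma idWord_add (i j : ℕ) :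
    idWord (i + j) = idWord i ++ List.range' (i + 1) j := by
  have h := @List.range'_append 1 i j 1
  simp only [one_mul] at h
  rw [idWord, idWord, ← h, Nat.add_comm 1 i]

private theorem stmt14_part1 : ∀ (N : ℕ) (u v : List ℕ), 1 ≤ N → IsPermWord u → IsPermWord v →
    (IsMultishuffle (idWord N) u (shiftWord u.length v) ↔
      (N = u.length + v.length ∧ u = idWord u.length ∧ v = idWord v.length)) := by
  intro N u v hN hu hv
  constructor
  · rintro ⟨hch, hmem, hwa, hwb⟩
    have hidp := idWord_pairwise N
    have hau : u = (idWord N).filter (fun x => decide (x ∈ u)) :=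
      multiword_sorted_eq (hidp.filter _) hwa
    have hbv : shiftWord u.length v =
        (idWord N).filter (fun x => decide (x ∈ shiftWord u.length v)) :=
      multiword_sorted_eq (hidp.filter _) hwb
    have hup : u.Pairwise (· < ·) := by rw [hau]; exact hidp.filter _
    have hbp : (shiftWord u.length v).Pairwise (· < ·) := by rw [hbv]; exact hidp.filter _
    have hvp : v.Pairwise (· < ·) := by
      rw [shiftWord, List.pairwise_map] at hbp
      exact hbp.imp fun h => by omega
    have hueq : u = idWord u.length := permWord_eq_idWord hu hup
    have hveq : v = idWord v.length := permWord_eq_idWord hv hvp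
    have husub : u ⊆ idWord N := by
      intro x hx; rw [hau] at hx; exact List.mem_of_mem_filter hx
    have hbsub : shiftWord u.length v ⊆ idWord N := by
      intro x hx; rw [hbv] at hx; exact List.mem_of_mem_filter hx
    have hb' : shiftWord u.length v = List.range' (u.length + 1) v.length := by
      conv_lhs => rw [hveq]
      exact shiftWord_idWord u.length v.length
    have hle : N ≤ u.length + v.length := by
      have hNmem : N ∈ idWord N := mem_idWord.mpr ⟨hN, le_refl N⟩
      rcases hmem N hNmem with h | h
      · have := (hu.2 N h).2; omega
      · rw [hb'] at h; have := (List.mem_range'_1.mp h).2; omega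
    have hge : u.length + v.length ≤ N := by
      rcases Nat.eq_zero_or_pos v.length with hj | hj
      · rcases Nat.eq_zero_or_pos u.length with hi | hi
        · omega
        · have hm0 : u.length ∈ idWord u.length := mem_idWord.mpr ⟨hi, le_refl _⟩
          have hm : u.length ∈ u := by rw [← hueq] at hm0; exact hm0
          have := (mem_idWord.mp (husub hm)).2; omega
      · have hm : u.length + v.length ∈ shiftWord u.length v := by
          rw [hb']; exact List.mem_range'_1.mpr ⟨by omega, by omega⟩
        have := (mem_idWord.mp (hbsub hm)).2; omega
    exact ⟨by omega, hueq, hveq⟩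
  · rintro ⟨hN', hueq, hveq⟩
    have hb' : shiftWord u.length v = List.range' (u.length + 1) v.length := by
      conv_lhs => rw [hveq]
      exact shiftWord_idWord u.length v.length
    have hsplit : idWord N = idWord u.length ++ List.range' (u.length + 1) v.length := by
      rw [hN']; exact idWord_add u.length v.length
    have hmu : ∀ x, x ∈ u ↔ (1 ≤ x ∧ x ≤ u.length) := by
      intro x
      conv_lhs => rw [hueq]
      exact mem_idWord
    have hmb : ∀ x, x ∈ shiftWord u.length v ↔
        (u.length + 1 ≤ x ∧ x < u.length + 1 + v.length) := by
      intro x; rw [hb']; exact List.mem_range'_1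
    refine ⟨?_, ?_, ?_, ?_⟩
    · exact List.Pairwise.isChain (List.nodup_range' (s := 1) (n := N))
    · intro x hx
      have := mem_idWord.mp hx
      rcases le_or_gt x u.length with h | h
      · exact Or.inl ((hmu x).mpr ⟨this.1, h⟩)
      · exact Or.inr ((hmb x).mpr ⟨by omega, by omega⟩)
    · have hfil : (idWord N).filter (fun x => decide (x ∈ u)) = u := by
        rw [hsplit, List.filter_append]
        have h1 : (idWord u.length).filter (fun x => decide (x ∈ u)) = idWord u.length :=
          List.filter_eq_self.mpr fun a ha => by
            simpa using (hmu a).mpr (mem_idWord.mp ha)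
        have h2 : (List.range' (u.length + 1) v.length).filter (fun x => decide (x ∈ u)) = [] :=
          List.filter_eq_nil_iff.mpr fun a ha => by
            have := List.mem_range'_1.mp ha
            simp only [decide_eq_true_eq]
            rw [hmu a]; omega
        rw [h1, h2, List.append_nil, ← hueq]
      rw [hfil]; exact multiword_self u
    · have hfil : (idWord N).filter (fun x => decide (x ∈ shiftWord u.length v))
          = shiftWord u.length v := by
        rw [hsplit, List.filter_append]
        have h1 : (idWord u.length).filter (fun x => decide (x ∈ shiftWord u.length v)) = [] :=
          List.filter_eq_nil_iff.mpr fun a ha => by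
            have := mem_idWord.mp ha
            simp only [decide_eq_true_eq]
            rw [hmb a]; omega
        have h2 : (List.range' (u.length + 1) v.length).filter
            (fun x => decide (x ∈ shiftWord u.length v)) = List.range' (u.length + 1) v.length :=
          List.filter_eq_self.mpr fun a ha => by
            simpa using (hmb a).mpr (List.mem_range'_1.mp ha)
        rw [h1, h2, List.nil_append, ← hb']
      rw [hfil]; exact multiword_self (shiftWord u.length v)

private lemma mem_allPerms {n : ℕ} {u : List ℕ} :
    u ∈ allPerms n ↔ ∃ i ≤ n, u.Perm (idWord i) := by
  simp [allPerms, permWords, List.mem_permutations, Nat.lt_succ_iff]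

private lemma isPermWord_of_mem_allPerms {n : ℕ} {u : List ℕ} (h : u ∈ allPerms n) :
    IsPermWord u ∧ u.length ≤ n := by
  obtain ⟨i, hi, hp⟩ := mem_allPerms.mp h
  have hlen : u.length = i := by rw [hp.length_eq, idWord_length]
  refine ⟨⟨hp.nodup_iff.mpr (List.nodup_range' (s := 1) (n := i)), ?_⟩, by omega⟩
  intro x hx
  have := mem_idWord.mp (hp.mem_iff.mp hx)
  omega

private lemma idWord_mem_allPerms {n i : ℕ} (h : i ≤ n) : idWord i ∈ allPerms n :=
  mem_allPerms.mpr ⟨i, h, List.Perm.refl _⟩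

/-! ### STATEMENT 14.
(i) The strictly increasing word `1 2 ⋯ N` is a multishuffle of a permutation `u ∈ S_i`
and `v[i]` (`v ∈ S_j`) iff `N = i + j`, `u = 1 2 ⋯ i` and `v = 1 2 ⋯ j`.
(ii) Consequently, in `MNSym`, `Δ(R̃_{(n)}) = Σ_{i=0}^{n} R̃_{(i)} ⊗ R̃_{(n-i)}`: the
coproduct sum `Σ R̃_{C(u)} ⊗ R̃_{C(v)}` over all pairs of permutations `(u,v)` with
`u ∈ S_i` such that `1 2 ⋯ n` is a multishuffle of `u` and `v[i]` (realized as a sum over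
all permutation words of length at most `n`, filtered by the multishuffle condition). -/
theorem stmt14 :
    (∀ (N : ℕ) (u v : List ℕ), 1 ≤ N → IsPermWord u → IsPermWord v →
      (IsMultishuffle (idWord N) u (shiftWord u.length v) ↔
        (N = u.length + v.length ∧ u = idWord u.length ∧ v = idWord v.length))) ∧
    (∀ n : ℕ, 1 ≤ n →
      (∑ u ∈ allPerms n, ∑ v ∈ allPerms n,
        indic (IsMultishuffle (idWord n) u (shiftWord u.length v))
          ((Rt (descComp u)) ⊗ₜ[ℤ] (Rt (descComp v))))
        = ∑ i ∈ Finset.range (n + 1),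
            (Rt (oneComp i)) ⊗ₜ[ℤ] (Rt (oneComp (n - i)))) := by
  classical
  refine ⟨stmt14_part1, ?_⟩
  intro n hn
  have hcong : ∀ p ∈ allPerms n ×ˢ allPerms n,
      indic (IsMultishuffle (idWord n) p.1 (shiftWord p.1.length p.2))
        (Rt (descComp p.1) ⊗ₜ[ℤ] Rt (descComp p.2))
      = if (n = p.1.length + p.2.length ∧ p.1 = idWord p.1.length ∧ p.2 = idWord p.2.length)
          then (Rt (descComp p.1) ⊗ₜ[ℤ] Rt (descComp p.2)) else 0 := by
    intro p hp
    rw [Finset.mem_product] at hp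
    rw [indic]
    exact if_congr (stmt14_part1 n p.1 p.2 hn (isPermWord_of_mem_allPerms hp.1).1
      (isPermWord_of_mem_allPerms hp.2).1) rfl rfl
  have hset : (allPerms n ×ˢ allPerms n).filter
      (fun p : List ℕ × List ℕ =>
        n = p.1.length + p.2.length ∧ p.1 = idWord p.1.length ∧ p.2 = idWord p.2.length)
      = (Finset.range (n + 1)).image (fun i => (idWord i, idWord (n - i))) := by
    ext p
    simp only [Finset.mem_filter, Finset.mem_image, Finset.mem_range, Finset.mem_product,
      Nat.lt_succ_iff]
    constructor
    · rintro ⟨⟨hp1, hp2⟩, hsum, he1, he2⟩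
      refine ⟨p.1.length, by omega, ?_⟩
      have h2 : n - p.1.length = p.2.length := by omega
      rw [h2, ← he1, ← he2]
    · rintro ⟨i, hi, rfl⟩
      have l1 : (idWord i).length = i := idWord_length i
      have l2 : (idWord (n - i)).length = n - i := idWord_length _
      exact ⟨⟨idWord_mem_allPerms hi, idWord_mem_allPerms (by omega)⟩,
        by rw [l1, l2]; omega, by rw [l1], by rw [l2]⟩
  have hinj : ∀ x ∈ Finset.range (n + 1), ∀ y ∈ Finset.range (n + 1),
      (fun i => ((idWord i, idWord (n - i)) : List ℕ × List ℕ)) x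
        = (fun i => (idWord i, idWord (n - i))) y → x = y := by
    intro x _ y _ h
    have := congrArg (fun p : List ℕ × List ℕ => p.1.length) h
    simpa [idWord_length] using this
  calc (∑ u ∈ allPerms n, ∑ v ∈ allPerms n,
        indic (IsMultishuffle (idWord n) u (shiftWord u.length v))
          ((Rt (descComp u)) ⊗ₜ[ℤ] (Rt (descComp v))))
      = ∑ p ∈ allPerms n ×ˢ allPerms n,
          indic (IsMultishuffle (idWord n) p.1 (shiftWord p.1.length p.2))
            ((Rt (descComp p.1)) ⊗ₜ[ℤ] (Rt (descComp p.2))) :=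
        (Finset.sum_product' (s := allPerms n) (t := allPerms n)
          (f := fun u v => indic (IsMultishuffle (idWord n) u (shiftWord u.length v))
            ((Rt (descComp u)) ⊗ₜ[ℤ] (Rt (descComp v))))).symm
    _ = ∑ p ∈ allPerms n ×ˢ allPerms n,
          (if (n = p.1.length + p.2.length ∧ p.1 = idWord p.1.length ∧ p.2 = idWord p.2.length)
            then (Rt (descComp p.1) ⊗ₜ[ℤ] Rt (descComp p.2)) else 0) :=
        Finset.sum_congr rfl hcong
    _ = ∑ p ∈ (allPerms n ×ˢ allPerms n).filter
          (fun p : List ℕ × List ℕ =>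
            n = p.1.length + p.2.length ∧ p.1 = idWord p.1.length ∧ p.2 = idWord p.2.length),
          (Rt (descComp p.1) ⊗ₜ[ℤ] Rt (descComp p.2)) := (Finset.sum_filter _ _).symm
    _ = ∑ i ∈ Finset.range (n + 1),
          (Rt (descComp (idWord i)) ⊗ₜ[ℤ] Rt (descComp (idWord (n - i)))) := by
        rw [hset, Finset.sum_image hinj]
    _ = ∑ i ∈ Finset.range (n + 1), (Rt (oneComp i)) ⊗ₜ[ℤ] (Rt (oneComp (n - i))) :=
        Finset.sum_congr rfl fun i _ => by rw [descComp_idWord, descComp_idWord]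

end
end
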